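/- arXiv:1302.5372 — 2 statements merged into one kernel-verified Lean document; each statement's English description precedes it below -/
import Mathlib

section
/- Let I be a homogeneous ideal in K[x_0,…,x_n]. Then the set of monomial ideals of the form in_w(I), as w varies over Γ^{n+1}, is finite. -/
set_option maxHeartbeats 1000000
set_option synthInstance.maxHeartbeats 400000


open MvPolynomial
open scoped Classical

noncomputable section

/-- Dot product `w·u` of a real weight vector with a nonnegative exponent vector. -/
def dotN {m : ℕ} (w : Fin m → ℝ) (u : Fin m →₀ ℕ) : ℝ := ∑ i, w i * (u i : ℝ)

/-- Dot product `w·u` of a real weight vector with an integer exponent vector. -/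
def dotZ {n : ℕ} (w : Fin n → ℝ) (u : Fin n → ℤ) : ℝ := ∑ i, w i * (u i : ℝ)

/-- Dot product of two real vectors. -/
def dotR {m : ℕ} (c x : Fin m → ℝ) : ℝ := ∑ i, c i * x i

/-- A field `K` together with: a nontrivial real-valued (additive) valuation
`val : K* → ℝ` (recorded as a function on `K`, constrained only at nonzero elements);
a residue field `𝕜` with the reduction map `res : K → 𝕜` (the canonical map
`R → 𝕜 = R/𝔪` on the valuation ring `R = {a : val a ≥ 0}`, junk elsewhere); and a fixed
splitting `t` of the valuation, i.e. a group-homomorphic section `w ↦ t^w` of `val`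
defined on the value group `Γ = im val`. -/
structure ValSetup (K 𝕜 : Type) [Field K] [Field 𝕜] where
  val : K → ℝ
  val_mul : ∀ {a b : K}, a ≠ 0 → b ≠ 0 → val (a * b) = val a + val b
  val_add : ∀ {a b : K}, a ≠ 0 → b ≠ 0 → a + b ≠ 0 → min (val a) (val b) ≤ val (a + b)
  val_one : val 1 = 0
  val_nontrivial : ∃ a : K, a ≠ 0 ∧ val a ≠ 0
  res : K → 𝕜
  res_add : ∀ {a b : K}, (a = 0 ∨ 0 ≤ val a) → (b = 0 ∨ 0 ≤ val b) → res (a + b) = res a + res b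
  res_mul : ∀ {a b : K}, (a = 0 ∨ 0 ≤ val a) → (b = 0 ∨ 0 ≤ val b) → res (a * b) = res a * res b
  res_one : res 1 = 1
  res_zero : res 0 = 0
  res_eq_zero_iff : ∀ {a : K}, a ≠ 0 → 0 ≤ val a → (res a = 0 ↔ 0 < val a)
  res_surjective : ∀ c : 𝕜, ∃ a : K, (a = 0 ∨ 0 ≤ val a) ∧ res a = c
  t : ℝ → K
  t_ne_zero : ∀ {r : ℝ}, (∃ a : K, a ≠ 0 ∧ val a = r) → t r ≠ 0
  t_add : ∀ {r₁ r₂ : ℝ}, (∃ a : K, a ≠ 0 ∧ val a = r₁) → (∃ a : K, a ≠ 0 ∧ val a = r₂) →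
    t (r₁ + r₂) = t r₁ * t r₂
  val_t : ∀ {r : ℝ}, (∃ a : K, a ≠ 0 ∧ val a = r) → val (t r) = r

namespace ValSetup

variable {K 𝕜 : Type} [Field K] [Field 𝕜]

/-- The value group `Γ = val(K*) ⊆ ℝ`. -/
def Gamma (V : ValSetup K 𝕜) : Set ℝ := {r : ℝ | ∃ a : K, a ≠ 0 ∧ V.val a = r}

/-- `trop(f)(w) = min { val(c_u) + w·u : c_u ≠ 0 }` for `f = Σ_u c_u x^u ∈ K[x_0,…,x_{m-1}]`. -/
def trop (V : ValSetup K 𝕜) {m : ℕ} (f : MvPolynomial (Fin m) K) (w : Fin m → ℝ) : ℝ :=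
  sInf ((fun u => V.val (coeff u f) + dotN w u) '' (f.support : Set (Fin m →₀ ℕ)))

/-- The initial form `in_w(f) = Σ_{val(c_u)+w·u = trop(f)(w)} (t^{-val(c_u)} c_u)‾ x^u`
in `𝕜[x_0,…,x_{m-1}]`. -/
def initialForm (V : ValSetup K 𝕜) {m : ℕ} (w : Fin m → ℝ) (f : MvPolynomial (Fin m) K) :
    MvPolynomial (Fin m) 𝕜 :=
  ∑ u ∈ f.support.filter (fun u => V.val (coeff u f) + dotN w u = V.trop f w),
    monomial u (V.res (V.t (-(V.val (coeff u f))) * coeff u f))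

/-- The initial ideal `in_w(I) = ⟨in_w(f) : f ∈ I⟩ ⊆ 𝕜[x_0,…,x_{m-1}]`. -/
def initialIdeal (V : ValSetup K 𝕜) {m : ℕ} (w : Fin m → ℝ)
    (I : Ideal (MvPolynomial (Fin m) K)) : Ideal (MvPolynomial (Fin m) 𝕜) :=
  Ideal.span {g | ∃ f ∈ I, g = V.initialForm w f}

/-- The Gröbner region `C_I[w] = {w' ∈ Γ^m : in_{w'}(I) = in_w(I)}`. -/
def groebnerRegion (V : ValSetup K 𝕜) {m : ℕ} (I : Ideal (MvPolynomial (Fin m) K))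
    (w : Fin m → ℝ) : Set (Fin m → ℝ) :=
  {w' | (∀ i, w' i ∈ V.Gamma) ∧ V.initialIdeal w' I = V.initialIdeal w I}

variable (V : ValSetup K 𝕜)

lemma val_mem_Gamma {a : K} (ha : a ≠ 0) : V.val a ∈ V.Gamma := ⟨a, ha, rfl⟩

lemma zero_mem_Gamma : (0:ℝ) ∈ V.Gamma := ⟨1, one_ne_zero, V.val_one⟩

lemma val_inv {a : K} (ha : a ≠ 0) : V.val a⁻¹ = -V.val a := by
  have h := V.val_mul ha (inv_ne_zero ha)
  rw [mul_inv_cancel₀ ha, V.val_one] at h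
  linarith

lemma neg_mem_Gamma {r : ℝ} (h : r ∈ V.Gamma) : -r ∈ V.Gamma := by
  obtain ⟨a, ha, rfl⟩ := h
  exact ⟨a⁻¹, inv_ne_zero ha, V.val_inv ha⟩

lemma add_mem_Gamma {r s : ℝ} (hr : r ∈ V.Gamma) (hs : s ∈ V.Gamma) : r + s ∈ V.Gamma := by
  obtain ⟨a, ha, rfl⟩ := hr; obtain ⟨b, hb, rfl⟩ := hs
  exact ⟨a * b, mul_ne_zero ha hb, V.val_mul ha hb⟩

lemma sub_mem_Gamma {r s : ℝ} (hr : r ∈ V.Gamma) (hs : s ∈ V.Gamma) : r - s ∈ V.Gamma := by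
  have := V.add_mem_Gamma hr (V.neg_mem_Gamma hs); simpa [sub_eq_add_neg] using this

lemma nsmul_mem_Gamma {r : ℝ} (h : r ∈ V.Gamma) (n : ℕ) : (n : ℝ) * r ∈ V.Gamma := by
  induction n with
  | zero => simpa using V.zero_mem_Gamma
  | succ k ih => push_cast; rw [add_mul, one_mul]; exact V.add_mem_Gamma ih h

lemma dotN_mem_Gamma {m : ℕ} {w : Fin m → ℝ} (hw : ∀ i, w i ∈ V.Gamma) (u : Fin m →₀ ℕ) :
    dotN w u ∈ V.Gamma := by
  classical
  unfold dotN
  refine Finset.sum_induction _ (· ∈ V.Gamma) (fun a b ha hb => V.add_mem_Gamma ha hb)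
    V.zero_mem_Gamma ?_
  intro i _
  rw [mul_comm]
  exact V.nsmul_mem_Gamma (hw i) (u i)

lemma t_ne_zero' {r : ℝ} (h : r ∈ V.Gamma) : V.t r ≠ 0 := V.t_ne_zero h

lemma val_t' {r : ℝ} (h : r ∈ V.Gamma) : V.val (V.t r) = r := V.val_t h

lemma t_zero : V.t 0 = 1 := by
  have h := V.t_add V.zero_mem_Gamma V.zero_mem_Gamma
  rw [add_zero] at h
  have h2 := V.t_ne_zero' V.zero_mem_Gamma
  field_simp at h
  tauto

lemma t_mul_t {r s : ℝ} (hr : r ∈ V.Gamma) (hs : s ∈ V.Gamma) :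
    V.t r * V.t s = V.t (r + s) := (V.t_add hr hs).symm

lemma t_neg_mul {r : ℝ} (h : r ∈ V.Gamma) : V.t (-r) * V.t r = 1 := by
  rw [V.t_mul_t (V.neg_mem_Gamma h) h, neg_add_cancel, V.t_zero]

lemma res_ne_zero {a : K} (ha : a ≠ 0) (h0 : V.val a = 0) : V.res a ≠ 0 := by
  intro h
  have := (V.res_eq_zero_iff ha (le_of_eq h0.symm)).1 h
  rw [h0] at this; exact lt_irrefl _ this

lemma res_t_neg_val_ne_zero {c : K} (hc : c ≠ 0) : V.res (V.t (-(V.val c)) * c) ≠ 0 := by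
  have hγ := V.neg_mem_Gamma (V.val_mem_Gamma hc)
  have htne := V.t_ne_zero' hγ
  refine V.res_ne_zero (mul_ne_zero htne hc) ?_
  rw [V.val_mul htne hc, V.val_t' hγ]; ring

lemma val_add' {c : ℝ} {a b : K} (ha : a = 0 ∨ c ≤ V.val a) (hb : b = 0 ∨ c ≤ V.val b) :
    a + b = 0 ∨ c ≤ V.val (a + b) := by
  by_cases ha0 : a = 0
  · subst ha0; simpa using hb
  by_cases hb0 : b = 0
  · subst hb0; simpa using ha
  replace ha : c ≤ V.val a := ha.resolve_left ha0
  replace hb : c ≤ V.val b := hb.resolve_left hb0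
  by_cases h : a + b = 0
  · exact Or.inl h
  · exact Or.inr (le_trans (le_min ha hb) (V.val_add ha0 hb0 h))

lemma val_sum {ι : Type*} (s : Finset ι) (g : ι → K) (c : ℝ)
    (h : ∀ i ∈ s, g i = 0 ∨ c ≤ V.val (g i)) :
    (∑ i ∈ s, g i) = 0 ∨ c ≤ V.val (∑ i ∈ s, g i) := by
  classical
  induction s using Finset.induction with
  | empty => simp
  | insert _ _ hnot ih =>
    rw [Finset.sum_insert hnot]
    exact V.val_add' (h _ (Finset.mem_insert_self _ _))
      (ih fun i hi => h i (Finset.mem_insert_of_mem hi))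

lemma res_sum {ι : Type*} (s : Finset ι) (g : ι → K)
    (h : ∀ i ∈ s, g i = 0 ∨ 0 ≤ V.val (g i)) :
    V.res (∑ i ∈ s, g i) = ∑ i ∈ s, V.res (g i) := by
  classical
  induction s using Finset.induction with
  | empty => simpa using V.res_zero
  | insert _ _ hnot ih =>
    rw [Finset.sum_insert hnot, Finset.sum_insert hnot,
      V.res_add (h _ (Finset.mem_insert_self _ _))
        (V.val_sum _ _ _ fun i hi => h i (Finset.mem_insert_of_mem hi)),
      ih fun i hi => h i (Finset.mem_insert_of_mem hi)]



variable {m : ℕ} {w : Fin m → ℝ} {f g : MvPolynomial (Fin m) K} {u : Fin m →₀ ℕ}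

lemma trop_le (V : ValSetup K 𝕜) (hu : u ∈ f.support) :
    V.trop f w ≤ V.val (coeff u f) + dotN w u := by
  apply csInf_le (Set.Finite.bddBelow (Set.Finite.image _ f.support.finite_toSet))
  exact ⟨u, hu, rfl⟩

lemma exists_trop_eq (V : ValSetup K 𝕜) (hf : f ≠ 0) :
    ∃ u ∈ f.support, V.val (coeff u f) + dotN w u = V.trop f w := by
  have hne : ((fun u => V.val (coeff u f) + dotN w u) '' (f.support : Set (Fin m →₀ ℕ))).Nonempty := by
    obtain ⟨u, hu⟩ := MvPolynomial.ne_zero_iff.1 hf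
    exact ⟨_, ⟨u, by simpa using hu, rfl⟩⟩
  have := Set.Nonempty.csInf_mem hne (Set.Finite.image _ f.support.finite_toSet)
  obtain ⟨u, hu, h⟩ := this
  exact ⟨u, hu, h⟩

lemma coeff_initialForm (V : ValSetup K 𝕜) :
    coeff u (V.initialForm w f) =
      if u ∈ f.support ∧ V.val (coeff u f) + dotN w u = V.trop f w
      then V.res (V.t (-(V.val (coeff u f))) * coeff u f) else 0 := by
  unfold initialForm
  rw [MvPolynomial.coeff_sum]
  simp only [coeff_monomial]
  rw [Finset.sum_ite_eq' _ u]
  simp [Finset.mem_filter]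

lemma coeff_initialForm_eq_zero (V : ValSetup K 𝕜) (h : coeff u f = 0) :
    coeff u (V.initialForm w f) = 0 := by
  rw [V.coeff_initialForm, if_neg]
  rintro ⟨hu, -⟩
  exact (mem_support_iff.1 hu) h

lemma initialForm_zero (V : ValSetup K 𝕜) : V.initialForm w (0 : MvPolynomial (Fin m) K) = 0 := by
  unfold initialForm
  exact Finset.sum_eq_zero fun u hu => absurd (Finset.mem_filter.1 hu).1 (by simp)

lemma initialForm_ne_zero (V : ValSetup K 𝕜) (hf : f ≠ 0) : V.initialForm w f ≠ 0 := by
  obtain ⟨u, hu, hequ⟩ := V.exists_trop_eq (w := w) hf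
  intro h
  have hc : coeff u f ≠ 0 := mem_support_iff.1 hu
  have := V.coeff_initialForm (w := w) (f := f) (u := u)
  rw [h, if_pos ⟨hu, hequ⟩] at this
  exact V.res_t_neg_val_ne_zero hc this.symm

lemma dotN_add {v : Fin m →₀ ℕ} : dotN w (u + v) = dotN w u + dotN w v := by
  unfold dotN
  rw [← Finset.sum_add_distrib]
  congr 1; ext i
  rw [Finsupp.add_apply]
  push_cast; ring

lemma dotN_single (i : Fin m) : dotN w (Finsupp.single i 1) = w i := by
  unfold dotN
  rw [Finset.sum_eq_single i]
  · simp
  · intro j _ hj; simp [Finsupp.single_apply, Ne.symm hj]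
  · simp

lemma support_smul_eq {a : K} (ha : a ≠ 0) : (a • f).support = f.support := by
  ext v
  simp only [mem_support_iff, MvPolynomial.coeff_smul, smul_eq_mul]
  exact ⟨fun h hc => h (by rw [hc, mul_zero]), fun h => mul_ne_zero ha h⟩

lemma coeff_smul' {a : K} : coeff u (a • f) = a * coeff u f := by
  rw [MvPolynomial.coeff_smul, smul_eq_mul]

lemma trop_smul (V : ValSetup K 𝕜) {a : K} (ha : a ≠ 0) (hf : f ≠ 0) :
    V.trop (a • f) w = V.val a + V.trop f w := by
  have haf : a • f ≠ 0 := by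
    intro h; apply hf; have := congrArg (fun p => a⁻¹ • p) h; simpa [smul_smul, inv_mul_cancel₀ ha] using this
  apply le_antisymm
  · obtain ⟨u, hu, hequ⟩ := V.exists_trop_eq (w := w) hf
    have h2 : u ∈ (a • f).support := by rw [support_smul_eq ha]; exact hu
    refine le_trans (V.trop_le h2) ?_
    rw [coeff_smul', V.val_mul ha (mem_support_iff.1 hu)]
    linarith
  · obtain ⟨u, hu, hequ⟩ := V.exists_trop_eq (w := w) haf
    rw [← hequ, coeff_smul', V.val_mul ha (by rw [support_smul_eq ha] at hu; exact mem_support_iff.1 hu)]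
    have := V.trop_le (w := w) (by rw [support_smul_eq ha] at hu; exact hu)
    linarith

lemma initialForm_t_smul (V : ValSetup K 𝕜) {γ : ℝ} (hγ : γ ∈ V.Gamma) (hf : f ≠ 0) :
    V.initialForm w (V.t γ • f) = V.initialForm w f := by
  have htne : V.t γ ≠ 0 := V.t_ne_zero' hγ
  apply MvPolynomial.ext
  intro u
  rw [V.coeff_initialForm, V.coeff_initialForm]
  by_cases hu : u ∈ f.support
  · have hc : coeff u f ≠ 0 := mem_support_iff.1 hu
    have hval : V.val (coeff u (V.t γ • f)) = γ + V.val (coeff u f) := by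
      rw [coeff_smul', V.val_mul htne hc, V.val_t' hγ]
    have hcond : (u ∈ (V.t γ • f).support ∧
        V.val (coeff u (V.t γ • f)) + dotN w u = V.trop (V.t γ • f) w) ↔
        (u ∈ f.support ∧ V.val (coeff u f) + dotN w u = V.trop f w) := by
      rw [support_smul_eq htne, hval, V.trop_smul htne hf, V.val_t' hγ]
      constructor
      · rintro ⟨h1, h2⟩; exact ⟨h1, by linarith⟩
      · rintro ⟨h1, h2⟩; exact ⟨h1, by linarith⟩
    rw [if_congr hcond rfl rfl]
    have hmem : -(γ + V.val (coeff u f)) ∈ V.Gamma :=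
      V.neg_mem_Gamma (V.add_mem_Gamma hγ (V.val_mem_Gamma hc))
    by_cases hcnd : u ∈ f.support ∧ V.val (coeff u f) + dotN w u = V.trop f w
    · rw [if_pos hcnd, if_pos hcnd]
      congr 1
      rw [coeff_smul', V.val_mul htne hc, V.val_t' hγ, ← mul_assoc, V.t_mul_t hmem hγ]
      congr 2
      ring
    · rw [if_neg hcnd, if_neg hcnd]
  · rw [if_neg (fun h : u ∈ (V.t γ • f).support ∧ _ =>
        hu (by have h1 := h.1; rwa [support_smul_eq htne] at h1)),
      if_neg (fun h : u ∈ f.support ∧ _ => hu h.1)]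

lemma res_coeff_initialForm (V : ValSetup K 𝕜) (hw : ∀ i, w i ∈ V.Gamma)
    (htrop : V.trop f w = 0) :
    coeff u (V.initialForm w f) = V.res (V.t (dotN w u) * coeff u f) := by
  have hdmem : dotN w u ∈ V.Gamma := V.dotN_mem_Gamma hw u
  have htne : V.t (dotN w u) ≠ 0 := V.t_ne_zero' hdmem
  rw [V.coeff_initialForm]
  by_cases hc : coeff u f = 0
  · rw [if_neg (fun h => (mem_support_iff.1 h.1) hc), hc, mul_zero, V.res_zero]
  · have hu : u ∈ f.support := mem_support_iff.2 hc
    by_cases heq : V.val (coeff u f) + dotN w u = V.trop f w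
    · rw [if_pos ⟨hu, heq⟩]
      rw [htrop] at heq
      have h2 : -(V.val (coeff u f)) = dotN w u := by linarith
      rw [h2]
    · rw [if_neg (fun h => heq h.2)]
      have hlt : 0 < V.val (V.t (dotN w u) * coeff u f) := by
        rw [V.val_mul htne hc, V.val_t' hdmem]
        have h1 := V.trop_le (w := w) hu
        rw [htrop] at h1
        rcases lt_or_eq_of_le h1 with h | h
        · linarith
        · exact absurd (by rw [htrop]; linarith) heq
      exact ((V.res_eq_zero_iff (mul_ne_zero htne hc) (le_of_lt hlt)).2 hlt).symm


lemma trop_mem_Gamma (V : ValSetup K 𝕜) (hw : ∀ i, w i ∈ V.Gamma) (hf : f ≠ 0) :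
    V.trop f w ∈ V.Gamma := by
  obtain ⟨u, hu, hequ⟩ := V.exists_trop_eq (w := w) hf
  rw [← hequ]
  exact V.add_mem_Gamma (V.val_mem_Gamma (mem_support_iff.1 hu)) (V.dotN_mem_Gamma hw u)

lemma initialForm_rel (V : ValSetup K 𝕜) (hw : ∀ i, w i ∈ V.Gamma) {ι : Type*} (s : Finset ι)
    (g : ι → MvPolynomial (Fin m) K) (b : ι → K)
    (htrop : ∀ i ∈ s, V.trop (g i) w = 0)
    (hb : ∀ i ∈ s, b i = 0 ∨ 0 ≤ V.val (b i))
    (hsum : ∑ i ∈ s, b i • g i = 0) :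
    ∑ i ∈ s, V.res (b i) • V.initialForm w (g i) = 0 := by
  apply MvPolynomial.ext; intro u
  have hdmem : dotN w u ∈ V.Gamma := V.dotN_mem_Gamma hw u
  have htne : V.t (dotN w u) ≠ 0 := V.t_ne_zero' hdmem
  have hcoeffok : ∀ i ∈ s, V.t (dotN w u) * coeff u (g i) = 0 ∨
      0 ≤ V.val (V.t (dotN w u) * coeff u (g i)) := by
    intro i hi
    by_cases hc : coeff u (g i) = 0
    · left; rw [hc, mul_zero]
    · right
      rw [V.val_mul htne hc, V.val_t' hdmem]
      have := V.trop_le (w := w) (f := g i) (mem_support_iff.2 hc)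
      rw [htrop i hi] at this
      linarith
  rw [coeff_zero, MvPolynomial.coeff_sum]
  have step1 : ∀ i ∈ s, coeff u (V.res (b i) • V.initialForm w (g i)) =
      V.res (b i * (V.t (dotN w u) * coeff u (g i))) := by
    intro i hi
    rw [MvPolynomial.coeff_smul, smul_eq_mul, V.res_coeff_initialForm hw (htrop i hi),
      V.res_mul (hb i hi) (hcoeffok i hi)]
  rw [Finset.sum_congr rfl step1, ← V.res_sum]
  · have : ∑ i ∈ s, b i * (V.t (dotN w u) * coeff u (g i)) =
        V.t (dotN w u) * coeff u (∑ i ∈ s, b i • g i) := by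
      rw [MvPolynomial.coeff_sum, Finset.mul_sum]
      apply Finset.sum_congr rfl
      intro i _
      rw [coeff_smul', ]
      ring
    rw [this, hsum, coeff_zero, mul_zero, V.res_zero]
  · intro i hi
    by_cases hbz : b i = 0
    · left; rw [hbz, zero_mul]
    by_cases hcz : V.t (dotN w u) * coeff u (g i) = 0
    · left; rw [hcz, mul_zero]
    · right
      rw [V.val_mul hbz hcz]
      have h1 := (hb i hi).resolve_left hbz
      have h2 := (hcoeffok i hi).resolve_left hcz
      linarith

lemma linearIndependent_of_initialForm (V : ValSetup K 𝕜) (hw : ∀ i, w i ∈ V.Gamma)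
    {ι : Type*} {g : ι → MvPolynomial (Fin m) K}
    (hind : LinearIndependent 𝕜 fun i : ι => V.initialForm w (g i)) :
    LinearIndependent K g := by
  have hind' := linearIndependent_iff'.1 hind
  rw [linearIndependent_iff']
  intro s a hsum i hi
  by_contra hai
  classical
  set s' : Finset ι := s.filter (fun j => a j ≠ 0) with hs'
  have hs'ne : s'.Nonempty := ⟨i, Finset.mem_filter.2 ⟨hi, hai⟩⟩
  have haj : ∀ j ∈ s', a j ≠ 0 := fun j hj => (Finset.mem_filter.1 hj).2
  have hgj : ∀ j ∈ s', g j ≠ 0 := by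
    intro j _ h0
    exact hind.ne_zero j (by rw [h0, V.initialForm_zero])
  set γ : ι → ℝ := fun j => V.trop (g j) w with hγdef
  have hγΓ : ∀ j ∈ s', γ j ∈ V.Gamma := fun j hj => V.trop_mem_Gamma hw (hgj j hj)
  set g' : ι → MvPolynomial (Fin m) K := fun j => V.t (-(γ j)) • g j with hg'def
  set a' : ι → K := fun j => a j * V.t (γ j) with ha'def
  have htrop' : ∀ j ∈ s', V.trop (g' j) w = 0 := by
    intro j hj
    rw [hg'def]
    simp only
    rw [V.trop_smul (V.t_ne_zero' (V.neg_mem_Gamma (hγΓ j hj))) (hgj j hj),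
      V.val_t' (V.neg_mem_Gamma (hγΓ j hj))]
    simp [hγdef]
  have hin' : ∀ j ∈ s', V.initialForm w (g' j) = V.initialForm w (g j) := fun j hj =>
    V.initialForm_t_smul (V.neg_mem_Gamma (hγΓ j hj)) (hgj j hj)
  have ha'ne : ∀ j ∈ s', a' j ≠ 0 := fun j hj =>
    mul_ne_zero (haj j hj) (V.t_ne_zero' (hγΓ j hj))
  have hsum' : ∑ j ∈ s', a' j • g' j = 0 := by
    have heq : ∀ j ∈ s', a' j • g' j = a j • g j := by
      intro j hj
      rw [ha'def, hg'def]
      simp only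
      rw [smul_smul, mul_assoc, mul_comm (V.t (γ j)), V.t_neg_mul (hγΓ j hj), mul_one]
    rw [Finset.sum_congr rfl heq]
    rw [hs', Finset.sum_filter_of_ne, hsum]
    intro j _ hne hzero
    rw [hzero, zero_smul] at hne
    exact hne rfl
  obtain ⟨j0, hj0, hj0eq⟩ := Finset.exists_mem_eq_inf' hs'ne (fun j => V.val (a' j))
  set μ : ℝ := s'.inf' hs'ne (fun j => V.val (a' j)) with hμdef
  have hμΓ : μ ∈ V.Gamma := by rw [hj0eq]; exact V.val_mem_Gamma (ha'ne j0 hj0)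
  set b : ι → K := fun j => V.t (-μ) * a' j with hbdef
  have hbval : ∀ j ∈ s', 0 ≤ V.val (b j) := by
    intro j hj
    rw [hbdef]
    simp only
    rw [V.val_mul (V.t_ne_zero' (V.neg_mem_Gamma hμΓ)) (ha'ne j hj),
      V.val_t' (V.neg_mem_Gamma hμΓ)]
    have : μ ≤ V.val (a' j) := Finset.inf'_le _ hj
    linarith
  have hbsum : ∑ j ∈ s', b j • g' j = 0 := by
    have : ∀ j ∈ s', b j • g' j = V.t (-μ) • (a' j • g' j) := by
      intro j _; simp only [hbdef, hg'def, smul_smul, mul_assoc]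
    rw [Finset.sum_congr rfl this, ← Finset.smul_sum, hsum', smul_zero]
  have hrel := V.initialForm_rel hw s' g' b htrop' (fun j hj => Or.inr (hbval j hj)) hbsum
  rw [Finset.sum_congr rfl (fun j hj => by rw [hin' j hj])] at hrel
  have hres0 := hind' s' (fun j => V.res (b j)) hrel j0 hj0
  have hbj0 : V.val (b j0) = 0 := by
    rw [hbdef]
    simp only
    rw [V.val_mul (V.t_ne_zero' (V.neg_mem_Gamma hμΓ)) (ha'ne j0 hj0),
      V.val_t' (V.neg_mem_Gamma hμΓ), ← hj0eq]
    ring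
  exact V.res_ne_zero (mul_ne_zero (V.t_ne_zero' (V.neg_mem_Gamma hμΓ)) (ha'ne j0 hj0)) hbj0 hres0

lemma support_initialForm_subset (V : ValSetup K 𝕜) :
    (V.initialForm w f).support ⊆ f.support := by
  intro u hu
  rw [mem_support_iff] at hu ⊢
  intro h
  exact hu (V.coeff_initialForm_eq_zero h)

lemma exists_initialForm_independent (V : ValSetup K 𝕜) (hw : ∀ i, w i ∈ V.Gamma) :
    ∀ (r : ℕ) (W : Submodule K (MvPolynomial (Fin m) K)), FiniteDimensional K W →
      Module.finrank K W = r →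
      ∃ g : Fin r → MvPolynomial (Fin m) K, (∀ i, g i ∈ W) ∧
        LinearIndependent 𝕜 (fun i => V.initialForm w (g i)) := by
  intro r
  induction r with
  | zero =>
    intro W _ _
    exact ⟨fun i => 0, fun i => W.zero_mem, linearIndependent_empty_type⟩
  | succ r ih =>
    intro W hfd hr
    have hWbot : W ≠ ⊥ := by
      intro h
      rw [h, finrank_bot] at hr
      exact Nat.succ_ne_zero r hr.symm
    obtain ⟨f, hfW, hf0⟩ := Submodule.exists_mem_ne_zero_of_ne_bot hWbot
    obtain ⟨ustar, hustar, hequ⟩ := V.exists_trop_eq (w := w) hf0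
    set φ : MvPolynomial (Fin m) K →ₗ[K] K := MvPolynomial.lcoeff K ustar with hφdef
    set W' : Submodule K (MvPolynomial (Fin m) K) := W ⊓ LinearMap.ker φ with hW'def
    have hW'le : W' ≤ W := inf_le_left
    have hfd' : FiniteDimensional K W' := Submodule.finiteDimensional_of_le hW'le
    set ψ : W →ₗ[K] K := φ.comp W.subtype with hψdef
    have hrange : LinearMap.range ψ = ⊤ := by
      rw [eq_top_iff]
      intro x _
      have hc : ψ ⟨f, hfW⟩ ≠ 0 := by
        simp only [hψdef, LinearMap.comp_apply, Submodule.coe_subtype, hφdef,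
          MvPolynomial.lcoeff_apply]
        exact mem_support_iff.1 hustar
      have := Submodule.smul_mem (LinearMap.range ψ) (x * (ψ ⟨f, hfW⟩)⁻¹)
        (LinearMap.mem_range_self ψ ⟨f, hfW⟩)
      rwa [smul_eq_mul, mul_assoc, inv_mul_cancel₀ hc, mul_one] at this
    have hkerrank : Module.finrank K (LinearMap.ker ψ) = r := by
      have h1 := LinearMap.finrank_range_add_finrank_ker ψ
      rw [hrange, finrank_top, Module.finrank_self, hr] at h1
      omega
    have hker_eq : LinearMap.ker ψ = Submodule.comap W.subtype W' := by
      rw [hψdef, LinearMap.ker_comp, hW'def, Submodule.comap_inf, Submodule.comap_subtype_self,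
        top_inf_eq]
    have hW'rank : Module.finrank K W' = r := by
      rw [← hkerrank, hker_eq]
      exact ((Submodule.comapSubtypeEquivOfLe hW'le).finrank_eq).symm
    obtain ⟨g', hg'W, hg'ind⟩ := ih W' hfd' hW'rank
    set G : Fin (r+1) → MvPolynomial (Fin m) K := Fin.cons f g' with hG
    refine ⟨G, ?_, ?_⟩
    · intro i
      refine Fin.cases ?_ ?_ i
      · simpa [hG] using hfW
      · intro j; simpa [hG] using hW'le (hg'W j)
    · have hfam : (fun i => V.initialForm w (G i)) =
          Fin.cons (V.initialForm w f) (fun j => V.initialForm w (g' j)) := by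
        funext i
        rcases Fin.eq_zero_or_eq_succ i with rfl | ⟨j, rfl⟩ <;> simp [hG]
      rw [hfam, linearIndependent_fin_cons]
      refine ⟨hg'ind, ?_⟩
      intro hmem
      have hspan : Submodule.span 𝕜 (Set.range fun j => V.initialForm w (g' j)) ≤
          LinearMap.ker (MvPolynomial.lcoeff 𝕜 ustar) := by
        rw [Submodule.span_le]
        rintro x ⟨j, rfl⟩
        rw [SetLike.mem_coe, LinearMap.mem_ker, MvPolynomial.lcoeff_apply]
        apply V.coeff_initialForm_eq_zero
        have hker := (Submodule.mem_inf.1 (hg'W j)).2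
        rw [hφdef, LinearMap.mem_ker, MvPolynomial.lcoeff_apply] at hker
        exact hker
      have h0 := hspan hmem
      rw [LinearMap.mem_ker, MvPolynomial.lcoeff_apply] at h0
      rw [V.coeff_initialForm, if_pos ⟨hustar, hequ⟩] at h0
      exact V.res_t_neg_val_ne_zero (mem_support_iff.1 hustar) h0

lemma mem_span_monomials_of_support_subset {R : Type} [CommRing R] {Ω : Finset (Fin m →₀ ℕ)}
    {q : MvPolynomial (Fin m) R} (h : q.support ⊆ Ω) :
    q ∈ Submodule.span R ((fun u => (monomial u (1 : R) : MvPolynomial (Fin m) R)) '' ↑Ω) := by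
  rw [MvPolynomial.as_sum q]
  apply Submodule.sum_mem
  intro u hu
  have : (monomial u) (coeff u q) = (coeff u q) • (monomial u (1 : R)) := by
    rw [MvPolynomial.smul_monomial, smul_eq_mul, mul_one]
  rw [this]
  exact Submodule.smul_mem _ _ (Submodule.subset_span ⟨u, h hu, rfl⟩)

lemma support_subset_of_mem_span {R : Type} [CommRing R] {T : Finset (MvPolynomial (Fin m) R)}
    {q : MvPolynomial (Fin m) R} (h : q ∈ Submodule.span R (T : Set (MvPolynomial (Fin m) R))) :
    q.support ⊆ T.sup MvPolynomial.support := by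
  induction h using Submodule.span_induction with
  | mem x hx => exact Finset.le_sup (f := MvPolynomial.support) (Finset.mem_coe.1 hx)
  | zero => simp
  | add x y _ _ hx hy =>
    exact subset_trans MvPolynomial.support_add (by
      intro u hu; rcases Finset.mem_union.1 hu with h | h
      exacts [hx h, hy h])
  | smul c x _ hx => exact subset_trans MvPolynomial.support_smul hx

lemma finiteDimensional_span_initialForm (V : ValSetup K 𝕜)
    (W : Submodule K (MvPolynomial (Fin m) K)) (hfd : FiniteDimensional K W) :
    FiniteDimensional 𝕜
      (Submodule.span 𝕜 (V.initialForm w '' (W : Set (MvPolynomial (Fin m) K)))) := by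
  have hfg : W.FG := (Submodule.fg_iff_finiteDimensional W).2 hfd
  obtain ⟨T, hT⟩ := hfg
  set Ω : Finset (Fin m →₀ ℕ) := T.sup MvPolynomial.support with hΩ
  have hle : Submodule.span 𝕜 (V.initialForm w '' (W : Set (MvPolynomial (Fin m) K))) ≤
      Submodule.span 𝕜 ((fun u => (monomial u (1 : 𝕜) : MvPolynomial (Fin m) 𝕜)) '' ↑Ω) := by
    rw [Submodule.span_le]
    rintro x ⟨p, hp, rfl⟩
    apply mem_span_monomials_of_support_subset
    refine subset_trans (V.support_initialForm_subset) ?_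
    apply support_subset_of_mem_span
    rw [hT]
    exact hp
  have : FiniteDimensional 𝕜
      (Submodule.span 𝕜 ((fun u => (monomial u (1 : 𝕜) : MvPolynomial (Fin m) 𝕜)) '' ↑Ω)) :=
    FiniteDimensional.span_of_finite 𝕜 (Set.Finite.image _ Ω.finite_toSet)
  exact Submodule.finiteDimensional_of_le hle

lemma finrank_span_initialForm (V : ValSetup K 𝕜) (hw : ∀ i, w i ∈ V.Gamma)
    (W : Submodule K (MvPolynomial (Fin m) K)) (hfd : FiniteDimensional K W) :
    Module.finrank 𝕜
      (Submodule.span 𝕜 (V.initialForm w '' (W : Set (MvPolynomial (Fin m) K)))) =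
    Module.finrank K W := by
  have hSfd := V.finiteDimensional_span_initialForm (w := w) W hfd
  set Sset : Set (MvPolynomial (Fin m) 𝕜) :=
    V.initialForm w '' (W : Set (MvPolynomial (Fin m) K)) with hSdef
  apply le_antisymm
  · -- ≤ : choose an independent spanning subset of the image, lift it
    obtain ⟨b, hbsub, hbspan, hbind⟩ := exists_linearIndependent 𝕜 Sset
    -- b is finite
    have hbfin : b.Finite := by
      by_contra hinf
      have hinf' : b.Infinite := hinf
      obtain ⟨c, hcsub, hccard⟩ := hinf'.exists_subset_card_eq
        (Module.finrank 𝕜 (Submodule.span 𝕜 Sset) + 1)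
      have hcind : LinearIndependent 𝕜 (fun x : c => (x : MvPolynomial (Fin m) 𝕜)) := by
        apply hbind.comp (fun x : c => (⟨x.1, hcsub x.2⟩ : b))
        intro x y hxy
        have h2 : (x : MvPolynomial (Fin m) 𝕜) = y := by simpa using hxy
        exact Subtype.ext h2
      have hmem : ∀ x : c, (x : MvPolynomial (Fin m) 𝕜) ∈ Submodule.span 𝕜 Sset := by
        intro x
        exact Submodule.subset_span (hbsub (hcsub x.2))
      have hcind' : LinearIndependent 𝕜
          (fun x : c => (⟨x.1, hmem x⟩ : Submodule.span 𝕜 Sset)) := by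
        apply LinearIndependent.of_comp (Submodule.span 𝕜 Sset).subtype
        exact hcind
      have := hcind'.fintype_card_le_finrank
      rw [Fintype.card_coe, hccard] at this
      omega
    have : Fintype b := hbfin.fintype
    rw [← hbspan, finrank_span_set_eq_card hbind]
    -- lift b into W
    have hchoice : ∀ x : b, ∃ p : MvPolynomial (Fin m) K, p ∈ W ∧ V.initialForm w p = x := by
      intro x
      obtain ⟨p, hp, hpx⟩ := hbsub x.2
      exact ⟨p, hp, hpx⟩
    choose F hFW hFx using hchoice
    have hFind : LinearIndependent K F := by
      apply V.linearIndependent_of_initialForm hw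
      have : (fun x : b => V.initialForm w (F x)) = (fun x : b => (x : MvPolynomial (Fin m) 𝕜)) := by
        funext x; rw [hFx]
      rw [this]
      exact hbind
    have hFind' : LinearIndependent K (fun x : b => (⟨F x, hFW x⟩ : W)) := by
      apply LinearIndependent.of_comp W.subtype
      exact hFind
    have := hFind'.fintype_card_le_finrank
    rw [Set.toFinset_card]
    exact this
  · -- ≥ : greedy construction
    obtain ⟨g, hgW, hgind⟩ := V.exists_initialForm_independent hw (Module.finrank K W) W hfd rfl
    have hmem : ∀ i, V.initialForm w (g i) ∈ Submodule.span 𝕜 Sset := fun i =>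
      Submodule.subset_span ⟨g i, hgW i, rfl⟩
    have hind' : LinearIndependent 𝕜
        (fun i => (⟨V.initialForm w (g i), hmem i⟩ : Submodule.span 𝕜 Sset)) := by
      apply LinearIndependent.of_comp (Submodule.span 𝕜 Sset).subtype
      exact hgind
    have := hind'.fintype_card_le_finrank
    rwa [Fintype.card_fin] at this


lemma trop_X_mul (V : ValSetup K 𝕜) (hf : f ≠ 0) (i : Fin m) :
    V.trop (X i * f) w = w i + V.trop f w := by
  have hXf : X i * f ≠ 0 := mul_ne_zero (MvPolynomial.X_ne_zero i) hf
  apply le_antisymm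
  · obtain ⟨u, hu, hequ⟩ := V.exists_trop_eq (w := w) hf
    have hu' : Finsupp.single i 1 + u ∈ (X i * f).support := by
      rw [MvPolynomial.support_X_mul]
      exact Finset.mem_map_of_mem _ hu
    have h1 := V.trop_le (w := w) hu'
    rw [MvPolynomial.coeff_X_mul, dotN_add, dotN_single] at h1
    linarith
  · obtain ⟨u', hu', hequ'⟩ := V.exists_trop_eq (w := w) hXf
    rw [MvPolynomial.support_X_mul, Finset.mem_map] at hu'
    obtain ⟨u, hu, rfl⟩ := hu'
    simp only [addLeftEmbedding_apply] at hequ'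
    rw [MvPolynomial.coeff_X_mul, dotN_add, dotN_single] at hequ'
    have h2 := V.trop_le (w := w) hu
    linarith

lemma initialForm_X_mul (V : ValSetup K 𝕜) (i : Fin m) :
    V.initialForm w (X i * f) = X i * V.initialForm w f := by
  by_cases hf : f = 0
  · rw [hf, mul_zero, V.initialForm_zero, mul_zero]
  have htrop := V.trop_X_mul (w := w) hf i
  have hX : (X i : MvPolynomial (Fin m) K) = monomial (Finsupp.single i 1) 1 := rfl
  have hX' : (X i : MvPolynomial (Fin m) 𝕜) = monomial (Finsupp.single i 1) 1 := rfl
  unfold initialForm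
  rw [MvPolynomial.support_X_mul, Finset.filter_map, Finset.sum_map, Finset.mul_sum]
  apply Finset.sum_congr
  · apply Finset.filter_congr
    intro u hu
    simp only [Function.comp_apply, addLeftEmbedding_apply]
    rw [MvPolynomial.coeff_X_mul, dotN_add, dotN_single, htrop]
    constructor <;> intro h <;> linarith
  · intro u hu
    simp only [addLeftEmbedding_apply]
    rw [MvPolynomial.coeff_X_mul, hX', monomial_mul, one_mul]

lemma coeff_hc_cases (d : ℕ) {u' : Fin m →₀ ℕ} (h : u' ∈ ((homogeneousComponent d) f).support) :
    u' ∈ f.support ∧ coeff u' ((homogeneousComponent d) f) = coeff u' f ∧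
      Finsupp.degree u' = d := by
  have hne := mem_support_iff.1 h
  rw [coeff_homogeneousComponent] at hne
  by_cases hdeg : Finsupp.degree u' = d
  · rw [if_pos hdeg] at hne
    exact ⟨mem_support_iff.2 hne, by rw [coeff_homogeneousComponent, if_pos hdeg], hdeg⟩
  · rw [if_neg hdeg] at hne
    exact absurd rfl hne

lemma trop_le_trop_hc (V : ValSetup K 𝕜) (d : ℕ) (hhc : (homogeneousComponent d) f ≠ 0) :
    V.trop f w ≤ V.trop ((homogeneousComponent d) f) w := by
  obtain ⟨u', hu', hequ'⟩ := V.exists_trop_eq (w := w) hhc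
  obtain ⟨h1, h2, -⟩ := coeff_hc_cases d hu'
  rw [← hequ', h2]
  exact V.trop_le h1

lemma initialForm_eq_sum_hc (V : ValSetup K 𝕜) :
    V.initialForm w f = ∑ d ∈ (f.support.image Finsupp.degree).filter
        (fun d => V.trop ((homogeneousComponent d) f) w = V.trop f w),
      V.initialForm w ((homogeneousComponent d) f) := by
  apply MvPolynomial.ext; intro u
  rw [MvPolynomial.coeff_sum]
  set d0 := Finsupp.degree u with hd0
  have hzero : ∀ d, d ≠ d0 → coeff u (V.initialForm w ((homogeneousComponent d) f)) = 0 := by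
    intro d hd
    apply V.coeff_initialForm_eq_zero
    rw [coeff_homogeneousComponent, if_neg (fun h => hd (by rw [← h, hd0]))]
  have hcoeffhc : coeff u ((homogeneousComponent d0) f) = coeff u f := by
    rw [coeff_homogeneousComponent, if_pos hd0.symm]
  by_cases hmem : d0 ∈ (f.support.image Finsupp.degree).filter
      (fun d => V.trop ((homogeneousComponent d) f) w = V.trop f w)
  · rw [Finset.sum_eq_single_of_mem d0 hmem (fun b _ hb => hzero b hb)]
    rw [V.coeff_initialForm, V.coeff_initialForm]
    have hsupp : u ∈ f.support ↔ u ∈ ((homogeneousComponent d0) f).support := by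
      rw [mem_support_iff, mem_support_iff, hcoeffhc]
    obtain ⟨-, htr⟩ := Finset.mem_filter.1 hmem
    by_cases hc : u ∈ f.support ∧ V.val (coeff u f) + dotN w u = V.trop f w
    · rw [if_pos hc, if_pos ⟨hsupp.1 hc.1, by rw [hcoeffhc, htr]; exact hc.2⟩, hcoeffhc]
    · rw [if_neg hc, if_neg (fun hh => hc ⟨hsupp.2 hh.1, by
        rw [← htr, ← hcoeffhc]; exact hh.2⟩)]
  · rw [Finset.sum_eq_zero (fun d hd => hzero d (fun h => hmem (h ▸ hd)))]
    rw [V.coeff_initialForm, if_neg]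
    rintro ⟨hu, heq⟩
    have himg : d0 ∈ f.support.image Finsupp.degree := Finset.mem_image_of_mem _ hu
    have husupp : u ∈ ((homogeneousComponent d0) f).support :=
      mem_support_iff.2 (by rw [hcoeffhc]; exact mem_support_iff.1 hu)
    have h1 : V.trop ((homogeneousComponent d0) f) w ≤ V.trop f w := by
      have h3 := V.trop_le (w := w) husupp
      rw [hcoeffhc] at h3
      rw [← heq]; exact h3
    have h2 := V.trop_le_trop_hc (w := w) d0
      (fun h => by rw [h] at husupp; simp at husupp)
    exact hmem (Finset.mem_filter.2 ⟨himg, le_antisymm h1 h2⟩)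

lemma isHomogeneous_of_forall {R : Type} [CommRing R] {p : MvPolynomial (Fin m) R} {d : ℕ}
    (h : ∀ u, coeff u p ≠ 0 → Finsupp.degree u = d) : p.IsHomogeneous d := by
  intro u hu
  rw [← show Finsupp.degree u = (Finsupp.weight 1) u from DFunLike.congr_fun Finsupp.degree_eq_weight_one u]
  exact h u hu

lemma degree_eq_of_isHomogeneous {R : Type} [CommRing R] {p : MvPolynomial (Fin m) R} {d : ℕ}
    (h : p.IsHomogeneous d) {u : Fin m →₀ ℕ} (hu : coeff u p ≠ 0) : Finsupp.degree u = d :=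
  (show Finsupp.degree u = (Finsupp.weight 1) u from DFunLike.congr_fun Finsupp.degree_eq_weight_one u).trans (h hu)

lemma initialForm_isHomogeneous (V : ValSetup K 𝕜) {d : ℕ} (hf : f.IsHomogeneous d) :
    (V.initialForm w f).IsHomogeneous d := by
  apply isHomogeneous_of_forall
  intro u hu
  have : coeff u f ≠ 0 := by
    intro h
    exact hu (V.coeff_initialForm_eq_zero h)
  exact degree_eq_of_isHomogeneous hf this


variable {I : Ideal (MvPolynomial (Fin m) K)}

lemma mem_initialIdeal_iff_span (V : ValSetup K 𝕜) {p : MvPolynomial (Fin m) 𝕜} :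
    p ∈ V.initialIdeal w I ↔
      p ∈ Submodule.span 𝕜 {g | ∃ f ∈ I, g = V.initialForm w f} := by
  set S : Set (MvPolynomial (Fin m) 𝕜) := {g | ∃ f ∈ I, g = V.initialForm w f} with hS
  set M : Submodule 𝕜 (MvPolynomial (Fin m) 𝕜) := Submodule.span 𝕜 S with hM
  constructor
  · intro hp
    have hXmul : ∀ (i : Fin m) (q : MvPolynomial (Fin m) 𝕜), q ∈ M → X i * q ∈ M := by
      intro i q hq
      induction hq using Submodule.span_induction with
      | mem x hx =>
        obtain ⟨f, hf, rfl⟩ := hx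
        exact Submodule.subset_span ⟨X i * f, I.mul_mem_left _ hf,
          (V.initialForm_X_mul i).symm⟩
      | zero => rw [mul_zero]; exact M.zero_mem
      | add x y _ _ hx hy => rw [mul_add]; exact M.add_mem hx hy
      | smul c x _ hx => rw [mul_smul_comm]; exact M.smul_mem c hx
    have hmul : ∀ p q : MvPolynomial (Fin m) 𝕜, q ∈ M → p * q ∈ M := by
      intro p
      induction p using MvPolynomial.induction_on with
      | C a => intro q hq; rw [← MvPolynomial.smul_eq_C_mul]; exact M.smul_mem a hq
      | add p1 p2 h1 h2 => intro q hq; rw [add_mul]; exact M.add_mem (h1 q hq) (h2 q hq)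
      | mul_X p i hp => intro q hq; rw [mul_assoc]; exact hp _ (hXmul i q hq)
    have hJ' : V.initialIdeal w I ≤
        ({ carrier := M,
           add_mem' := fun h1 h2 => M.add_mem h1 h2,
           zero_mem' := M.zero_mem,
           smul_mem' := fun c x hx => by
             simp only [smul_eq_mul]
             exact hmul c x hx } : Ideal (MvPolynomial (Fin m) 𝕜)) := by
      apply Ideal.span_le.2
      intro g hg
      exact Submodule.subset_span hg
    exact hJ' hp
  · intro hp
    induction hp using Submodule.span_induction with
    | mem x hx => exact Ideal.subset_span hx
    | zero => exact (V.initialIdeal w I).zero_mem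
    | add x y _ _ hx hy => exact (V.initialIdeal w I).add_mem hx hy
    | smul c x _ hx =>
      rw [MvPolynomial.smul_eq_C_mul]
      exact (V.initialIdeal w I).mul_mem_left _ hx


end ValSetup

/-- `trop(g)(v) = min { v·u : c_u ≠ 0 }` for `g ∈ 𝕜[x]`, w.r.t. the trivial valuation on `𝕜`. -/
def tropTriv {𝕜 : Type} [Field 𝕜] {m : ℕ} (g : MvPolynomial (Fin m) 𝕜) (v : Fin m → ℝ) : ℝ :=
  sInf ((fun u => dotN v u) '' (g.support : Set (Fin m →₀ ℕ)))

/-- Initial form `in_v(g)`, w.r.t. the trivial valuation on the residue field: the sum of the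
terms of `g` whose exponents `u` minimize `v·u`. -/
def initialFormTriv {𝕜 : Type} [Field 𝕜] {m : ℕ} (v : Fin m → ℝ) (g : MvPolynomial (Fin m) 𝕜) :
    MvPolynomial (Fin m) 𝕜 :=
  ∑ u ∈ g.support.filter (fun u => dotN v u = tropTriv g v), monomial u (coeff u g)

/-- Initial ideal `in_v(J) = ⟨in_v(g) : g ∈ J⟩` w.r.t. the trivial valuation. -/
def initialIdealTriv {𝕜 : Type} [Field 𝕜] {m : ℕ} (v : Fin m → ℝ)
    (J : Ideal (MvPolynomial (Fin m) 𝕜)) : Ideal (MvPolynomial (Fin m) 𝕜) :=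
  Ideal.span {h | ∃ g ∈ J, h = initialFormTriv v g}

/-- A homogeneous ideal of `R[x_0,…,x_{m-1}]`: one containing all homogeneous components of
its elements. -/
def IsHomogIdeal {R : Type} [CommSemiring R] {m : ℕ} (I : Ideal (MvPolynomial (Fin m) R)) :
    Prop :=
  ∀ f ∈ I, ∀ d : ℕ, homogeneousComponent d f ∈ I

/-- A monomial ideal: an ideal generated by monomials. -/
def IsMonomialIdeal {R : Type} [CommSemiring R] {m : ℕ} (J : Ideal (MvPolynomial (Fin m) R)) :
    Prop :=
  ∃ S : Set (Fin m →₀ ℕ), J = Ideal.span ((fun u => (monomial u 1 : MvPolynomial (Fin m) R)) '' S)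

def levelFinset (m d : ℕ) : Finset (Fin m →₀ ℕ) :=
  (((Fintype.piFinset fun _ : Fin m => Finset.range (d+1))).image
    (fun g => (Finsupp.equivFunOnFinite).symm g)).filter fun u => Finsupp.degree u = d

lemma mem_levelFinset {m d : ℕ} {u : Fin m →₀ ℕ} :
    u ∈ levelFinset m d ↔ Finsupp.degree u = d := by
  constructor
  · exact fun h => (Finset.mem_filter.1 h).2
  · intro h
    refine Finset.mem_filter.2 ⟨?_, h⟩
    apply Finset.mem_image.2
    refine ⟨fun i => u i, ?_, ?_⟩
    · apply Fintype.mem_piFinset.2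
      intro i
      rw [Finset.mem_range]
      have := Finsupp.le_degree i u
      omega
    · exact Finsupp.equivFunOnFinite_symm_coe u

lemma homogeneousSubmodule_le_span {R : Type} [Field R] {m d : ℕ} :
    homogeneousSubmodule (Fin m) R d ≤
      Submodule.span R ((fun u => (monomial u (1 : R) : MvPolynomial (Fin m) R)) ''
        ↑(levelFinset m d)) := by
  intro p hp
  apply ValSetup.mem_span_monomials_of_support_subset
  intro u hu
  rw [mem_levelFinset]
  exact ValSetup.degree_eq_of_isHomogeneous (((mem_homogeneousSubmodule _ _).1 hp))
    (mem_support_iff.1 hu)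

lemma homogeneousSubmodule_fd {R : Type} [Field R] {m d : ℕ} :
    FiniteDimensional R (homogeneousSubmodule (Fin m) R d) := by
  have : FiniteDimensional R (Submodule.span R
      ((fun u => (monomial u (1 : R) : MvPolynomial (Fin m) R)) '' ↑(levelFinset m d))) :=
    FiniteDimensional.span_of_finite R (Set.Finite.image _ (levelFinset m d).finite_toSet)
  exact Submodule.finiteDimensional_of_le homogeneousSubmodule_le_span


section PartA

variable {K 𝕜 : Type} [Field K] [Field 𝕜] {m : ℕ}

/-- Degree-`d` part of an ideal, as a `K`-submodule. -/
def Wd (I : Ideal (MvPolynomial (Fin m) K)) (d : ℕ) : Submodule K (MvPolynomial (Fin m) K) :=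
  Submodule.restrictScalars K I ⊓ homogeneousSubmodule (Fin m) K d

lemma mem_Wd {I : Ideal (MvPolynomial (Fin m) K)} {d : ℕ} {f : MvPolynomial (Fin m) K} :
    f ∈ Wd I d ↔ f ∈ I ∧ f.IsHomogeneous d := by
  rw [Wd, Submodule.mem_inf, Submodule.restrictScalars_mem, mem_homogeneousSubmodule]

lemma fd_Wd (I : Ideal (MvPolynomial (Fin m) K)) (d : ℕ) : FiniteDimensional K (Wd I d) := by
  haveI := homogeneousSubmodule_fd (R := K) (m := m) (d := d)
  exact Submodule.finiteDimensional_of_le inf_le_right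

/-- Degree-`d` part of the initial ideal. -/
def Nd (V : ValSetup K 𝕜) (w : Fin m → ℝ) (I : Ideal (MvPolynomial (Fin m) K)) (d : ℕ) :
    Submodule 𝕜 (MvPolynomial (Fin m) 𝕜) :=
  Submodule.span 𝕜 (V.initialForm w '' ((Wd I d : Submodule K (MvPolynomial (Fin m) K)) :
    Set (MvPolynomial (Fin m) K)))

lemma Nd_le_homog (V : ValSetup K 𝕜) (w : Fin m → ℝ) (I : Ideal (MvPolynomial (Fin m) K))
    (d : ℕ) : Nd V w I d ≤ homogeneousSubmodule (Fin m) 𝕜 d := by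
  rw [Nd, Submodule.span_le]
  rintro g ⟨f, hf, rfl⟩
  rw [SetLike.mem_coe, mem_homogeneousSubmodule]
  exact V.initialForm_isHomogeneous (mem_Wd.1 hf).2

lemma mem_initialIdeal_iff_iSup (V : ValSetup K 𝕜) {w : Fin m → ℝ}
    {I : Ideal (MvPolynomial (Fin m) K)} (hI : IsHomogIdeal I)
    {p : MvPolynomial (Fin m) 𝕜} :
    p ∈ V.initialIdeal w I ↔ p ∈ ⨆ d : ℕ, Nd V w I d := by
  rw [V.mem_initialIdeal_iff_span]
  constructor
  · intro hp
    refine Submodule.span_le.2 ?_ hp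
    rintro g ⟨f, hf, rfl⟩
    rw [SetLike.mem_coe, V.initialForm_eq_sum_hc]
    apply Submodule.sum_mem
    intro d _
    have hhc : homogeneousComponent d f ∈ Wd I d :=
      mem_Wd.2 ⟨hI f hf d, homogeneousComponent_isHomogeneous d f⟩
    exact Submodule.mem_iSup_of_mem d (Submodule.subset_span ⟨_, hhc, rfl⟩)
  · intro hp
    have hle : (⨆ d : ℕ, Nd V w I d) ≤
        Submodule.span 𝕜 {g | ∃ f ∈ I, g = V.initialForm w f} := by
      apply iSup_le
      intro d
      rw [Nd, Submodule.span_le]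
      rintro g ⟨f, hf, rfl⟩
      exact Submodule.subset_span ⟨f, (mem_Wd.1 hf).1, rfl⟩
    exact hle hp

lemma graded_piece (V : ValSetup K 𝕜) {w : Fin m → ℝ} {I : Ideal (MvPolynomial (Fin m) K)}
    (hI : IsHomogIdeal I) (d : ℕ) :
    Submodule.restrictScalars 𝕜 (V.initialIdeal w I) ⊓ homogeneousSubmodule (Fin m) 𝕜 d =
      Nd V w I d := by
  apply le_antisymm
  · rintro p hp
    rw [Submodule.mem_inf, Submodule.restrictScalars_mem] at hp
    obtain ⟨hp1, hp2⟩ := hp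
    rw [mem_initialIdeal_iff_iSup V hI, Submodule.mem_iSup_iff_exists_finsupp] at hp1
    obtain ⟨q, hq, hqsum⟩ := hp1
    have hpd : (homogeneousComponent d) p = p := by
      rw [homogeneousComponent_of_mem hp2, if_pos rfl]
    have hsum : (homogeneousComponent d) p = q d := by
      rw [← hqsum, map_finsuppSum]
      rw [Finsupp.sum]
      rw [Finset.sum_eq_single d]
      · rw [homogeneousComponent_of_mem (Nd_le_homog V w I d (hq d)), if_pos rfl]
      · intro e he hne
        rw [homogeneousComponent_of_mem (Nd_le_homog V w I e (hq e)), if_neg (Ne.symm hne)]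
      · intro hd
        rw [Finsupp.notMem_support_iff.1 hd, map_zero]
    rw [← hpd, hsum]
    exact hq d
  · apply le_inf
    · rw [Nd, Submodule.span_le]
      rintro g ⟨f, hf, rfl⟩
      rw [SetLike.mem_coe, Submodule.restrictScalars_mem]
      exact Ideal.subset_span ⟨f, (mem_Wd.1 hf).1, rfl⟩
    · exact Nd_le_homog V w I d

/-- The Hilbert function of `I`. -/
def hilb (I : Ideal (MvPolynomial (Fin m) K)) (d : ℕ) : ℕ :=
  Module.finrank K (Wd I d)

lemma finrank_Nd (V : ValSetup K 𝕜) {w : Fin m → ℝ} (hw : ∀ i, w i ∈ V.Gamma)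
    (I : Ideal (MvPolynomial (Fin m) K)) (d : ℕ) :
    Module.finrank 𝕜 (Nd V w I d) = hilb I d :=
  V.finrank_span_initialForm hw (Wd I d) (fd_Wd I d)

/-- Degree-`d` monomials of a monomial ideal. -/
def monsd (J : Ideal (MvPolynomial (Fin m) 𝕜)) (d : ℕ) : Finset (Fin m →₀ ℕ) :=
  (levelFinset m d).filter (fun u => monomial u (1:𝕜) ∈ J)

lemma monomialIdeal_graded {J : Ideal (MvPolynomial (Fin m) 𝕜)} (hJ : IsMonomialIdeal J)
    (d : ℕ) :
    Submodule.restrictScalars 𝕜 J ⊓ homogeneousSubmodule (Fin m) 𝕜 d =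
      Submodule.span 𝕜 ((fun u => (monomial u (1:𝕜) : MvPolynomial (Fin m) 𝕜)) ''
        ↑(monsd J d)) := by
  obtain ⟨S, hS⟩ := hJ
  apply le_antisymm
  · rintro p hp
    rw [Submodule.mem_inf, Submodule.restrictScalars_mem] at hp
    obtain ⟨hp1, hp2⟩ := hp
    apply ValSetup.mem_span_monomials_of_support_subset
    intro u hu
    rw [monsd, Finset.mem_filter, mem_levelFinset]
    constructor
    · exact ValSetup.degree_eq_of_isHomogeneous ((mem_homogeneousSubmodule _ _).1 hp2)
        (mem_support_iff.1 hu)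
    · rw [hS, mem_ideal_span_monomial_image]
      intro xi hxi
      rw [MvPolynomial.support_monomial, if_neg one_ne_zero, Finset.mem_singleton] at hxi
      rw [hxi]
      rw [hS] at hp1
      exact (mem_ideal_span_monomial_image.1 hp1) u hu
  · rw [Submodule.span_le]
    rintro g ⟨u, hu, rfl⟩
    rw [Finset.mem_coe, monsd, Finset.mem_filter, mem_levelFinset] at hu
    rw [SetLike.mem_coe, Submodule.mem_inf, Submodule.restrictScalars_mem,
      mem_homogeneousSubmodule]
    exact ⟨hu.2, isHomogeneous_monomial _ hu.1⟩

lemma finrank_span_monsd (J : Ideal (MvPolynomial (Fin m) 𝕜)) (d : ℕ) :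
    Module.finrank 𝕜 (Submodule.span 𝕜
      ((fun u => (monomial u (1:𝕜) : MvPolynomial (Fin m) 𝕜)) '' ↑(monsd J d))) =
    (monsd J d).card := by
  have hb : LinearIndependent 𝕜
      (fun u : ↥(monsd J d) => (monomial (u : Fin m →₀ ℕ) (1:𝕜) : MvPolynomial (Fin m) 𝕜)) := by
    have h1 := (MvPolynomial.basisMonomials (Fin m) 𝕜).linearIndependent
    have h2 := h1.comp (fun u : ↥(monsd J d) => (u : Fin m →₀ ℕ)) Subtype.val_injective
    rw [MvPolynomial.coe_basisMonomials] at h2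
    exact h2
  have hrange : Set.range (fun u : ↥(monsd J d) =>
      (monomial (u : Fin m →₀ ℕ) (1:𝕜) : MvPolynomial (Fin m) 𝕜)) =
      (fun u => (monomial u (1:𝕜) : MvPolynomial (Fin m) 𝕜)) '' ↑(monsd J d) := by
    ext x
    constructor
    · rintro ⟨u, rfl⟩
      exact ⟨u.1, Finset.mem_coe.2 u.2, rfl⟩
    · rintro ⟨u, hu, rfl⟩
      exact ⟨⟨u, Finset.mem_coe.1 hu⟩, rfl⟩
  rw [← hrange, finrank_span_eq_card hb, Fintype.card_coe]

lemma count_eq_hilb (V : ValSetup K 𝕜) {w : Fin m → ℝ} (hw : ∀ i, w i ∈ V.Gamma)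
    {I : Ideal (MvPolynomial (Fin m) K)} (hI : IsHomogIdeal I)
    {J : Ideal (MvPolynomial (Fin m) 𝕜)} (hJ : IsMonomialIdeal J)
    (hJw : J = V.initialIdeal w I) (d : ℕ) :
    (monsd J d).card = hilb I d := by
  rw [← finrank_span_monsd J d, ← monomialIdeal_graded hJ d, hJw, graded_piece V hI d,
    finrank_Nd V hw I d]

end PartA

section Comb

variable {𝕜 : Type} [Field 𝕜] {m : ℕ}

lemma monomial_ideals_finite (S : Set (Ideal (MvPolynomial (Fin m) 𝕜))) (h : ℕ → ℕ)
    (hmono : ∀ J ∈ S, IsMonomialIdeal J)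
    (hcount : ∀ J, (hJ : J ∈ S) → ∀ d, (monsd J d).card = h d) : S.Finite := by
  by_contra hinf
  have hinf' : S.Infinite := hinf
  haveI : Infinite ↥S := hinf'.to_subtype
  set 𝒰 : Ultrafilter ↥S := Ultrafilter.of (Filter.cofinite : Filter ↥S) with h𝒰
  have hUinf : ∀ T ∈ 𝒰, T.Infinite := by
    intro T hT
    by_contra hTfin
    have hTfin' : T.Finite := Set.not_infinite.1 hTfin
    have hcompl : Tᶜ ∈ (Filter.cofinite : Filter ↥S) := by
      rw [Filter.mem_cofinite, compl_compl]
      exact hTfin'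
    have h2 : Tᶜ ∈ 𝒰 :=
      Filter.le_def.mp (Ultrafilter.of_le (Filter.cofinite : Filter ↥S)) _ hcompl
    have h3 : T ∩ Tᶜ ∈ 𝒰 := Filter.inter_mem hT h2
    rw [Set.inter_compl_self] at h3
    exact Ultrafilter.empty_notMem h3
  set A : Set (Fin m →₀ ℕ) :=
    {u | {J : ↥S | monomial u (1:𝕜) ∈ (J : Ideal (MvPolynomial (Fin m) 𝕜))} ∈ 𝒰} with hA
  have hlevel : ∀ d : ℕ, {J : ↥S | ∀ u ∈ levelFinset m d,
      (monomial u (1:𝕜) ∈ (J : Ideal (MvPolynomial (Fin m) 𝕜)) ↔ u ∈ A)} ∈ 𝒰 := by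
    intro d
    have h1 : {J : ↥S | ∀ u ∈ levelFinset m d,
        (monomial u (1:𝕜) ∈ (J : Ideal (MvPolynomial (Fin m) 𝕜)) ↔ u ∈ A)} =
        ⋂ u ∈ (levelFinset m d : Set (Fin m →₀ ℕ)),
          {J : ↥S | monomial u (1:𝕜) ∈ (J : Ideal (MvPolynomial (Fin m) 𝕜)) ↔ u ∈ A} := by
      ext J
      simp only [Set.mem_setOf_eq, Set.mem_iInter, Finset.mem_coe]
    rw [h1]
    refine (Filter.biInter_mem (levelFinset m d).finite_toSet).2 ?_
    intro u _
    by_cases huA : u ∈ A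
    · refine Filter.mem_of_superset huA ?_
      intro J hJ
      exact iff_of_true hJ huA
    · have hcompl : {J : ↥S | monomial u (1:𝕜) ∈ (J : Ideal (MvPolynomial (Fin m) 𝕜))}ᶜ ∈ 𝒰 :=
        Ultrafilter.compl_mem_iff_notMem.2 huA
      refine Filter.mem_of_superset hcompl ?_
      intro J hJ
      exact iff_of_false hJ huA
  have hAcount : ∀ d : ℕ, ((levelFinset m d).filter (fun u => u ∈ A)).card = h d := by
    intro d
    obtain ⟨J, hJ⟩ := (hUinf _ (hlevel d)).nonempty
    have heq : (levelFinset m d).filter (fun u => u ∈ A) = monsd (J : Ideal (MvPolynomial (Fin m) 𝕜)) d := by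
      apply Finset.filter_congr
      intro u hu
      exact (hJ u hu).symm
    rw [heq]
    exact hcount (J : Ideal (MvPolynomial (Fin m) 𝕜)) J.2 d
  have hAup : ∀ u v : Fin m →₀ ℕ, u ≤ v → u ∈ A → v ∈ A := by
    intro u v huv hu
    refine Filter.mem_of_superset hu ?_
    intro J hJ
    show monomial v (1:𝕜) ∈ (J : Ideal (MvPolynomial (Fin m) 𝕜))
    have hvu : monomial v (1:𝕜) = monomial (v - u) 1 * monomial u 1 := by
      rw [monomial_mul, one_mul, tsub_add_cancel_of_le huv]
    rw [hvu]
    exact Ideal.mul_mem_left _ _ hJ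
  set Jhat : Ideal (MvPolynomial (Fin m) 𝕜) :=
    Ideal.span ((fun u => monomial u (1:𝕜)) '' A) with hJhat
  have hmonJhat : ∀ u, monomial u (1:𝕜) ∈ Jhat ↔ u ∈ A := by
    intro u
    rw [hJhat, mem_ideal_span_monomial_image]
    constructor
    · intro hh
      have hmem := hh u (by
        rw [MvPolynomial.support_monomial, if_neg one_ne_zero]
        exact Finset.mem_singleton_self u)
      obtain ⟨s, hsA, hsu⟩ := hmem
      exact hAup s u hsu hsA
    · intro hu xi hxi
      rw [MvPolynomial.support_monomial, if_neg one_ne_zero, Finset.mem_singleton] at hxi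
      exact ⟨u, hu, le_of_eq hxi.symm⟩
  have hfg : Jhat.FG := IsNoetherian.noetherian Jhat
  obtain ⟨Tgen, hTgen⟩ := hfg
  have hxT : ∀ x : MvPolynomial (Fin m) 𝕜, x ∈ Tgen →
      ∃ T : Finset (MvPolynomial (Fin m) 𝕜),
        ↑T ⊆ (fun u => monomial u (1:𝕜)) '' A ∧ x ∈ Ideal.span (↑T : Set _) := by
    intro x hx
    have : x ∈ Ideal.span ((fun u => monomial u (1:𝕜)) '' A) := by
      rw [← hJhat]
      rw [← hTgen]
      exact Ideal.subset_span hx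
    exact Submodule.mem_span_finite_of_mem_span this
  choose F hF1 hF2 using hxT
  set T0 : Finset (MvPolynomial (Fin m) 𝕜) := Tgen.attach.biUnion (fun x => F x.1 x.2) with hT0
  have hT0sub : (T0 : Set (MvPolynomial (Fin m) 𝕜)) ⊆ (fun u => monomial u (1:𝕜)) '' A := by
    intro y hy
    rw [hT0] at hy
    rw [Finset.mem_coe, Finset.mem_biUnion] at hy
    obtain ⟨x, _, hyx⟩ := hy
    exact hF1 x.1 x.2 (Finset.mem_coe.2 hyx)
  have hspan : Jhat = Ideal.span (T0 : Set (MvPolynomial (Fin m) 𝕜)) := by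
    apply le_antisymm
    · rw [← hTgen]
      apply Ideal.span_le.2
      intro x hx
      have hx' : x ∈ Tgen := Finset.mem_coe.1 hx
      refine Ideal.span_mono ?_ (hF2 x hx')
      intro y hy
      rw [Finset.mem_coe] at hy ⊢
      rw [hT0]
      rw [Finset.mem_biUnion]
      exact ⟨⟨x, hx'⟩, Finset.mem_attach _ _, hy⟩
    · apply Ideal.span_le.2
      intro y hy
      obtain ⟨u, huA, rfl⟩ := hT0sub hy
      exact (hmonJhat u).2 huA
  have hT0mem : ∀ y ∈ T0, {J : ↥S | y ∈ (J : Ideal (MvPolynomial (Fin m) 𝕜))} ∈ 𝒰 := by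
    intro y hy
    obtain ⟨u, huA, rfl⟩ := hT0sub (Finset.mem_coe.2 hy)
    exact huA
  have hTU : {J : ↥S | ∀ y ∈ T0, y ∈ (J : Ideal (MvPolynomial (Fin m) 𝕜))} ∈ 𝒰 := by
    have h1 : {J : ↥S | ∀ y ∈ T0, y ∈ (J : Ideal (MvPolynomial (Fin m) 𝕜))} =
        ⋂ y ∈ (T0 : Set (MvPolynomial (Fin m) 𝕜)),
          {J : ↥S | y ∈ (J : Ideal (MvPolynomial (Fin m) 𝕜))} := by
      ext J
      simp only [Set.mem_setOf_eq, Set.mem_iInter, Finset.mem_coe]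
    rw [h1]
    refine (Filter.biInter_mem T0.finite_toSet).2 ?_
    intro y hy
    exact hT0mem y (Finset.mem_coe.1 hy)
  have key : ∀ J : ↥S, (∀ y ∈ T0, y ∈ (J : Ideal (MvPolynomial (Fin m) 𝕜))) →
      (J : Ideal (MvPolynomial (Fin m) 𝕜)) = Jhat := by
    intro J hJ
    have hsub : Jhat ≤ (J : Ideal (MvPolynomial (Fin m) 𝕜)) := by
      rw [hspan]
      apply Ideal.span_le.2
      intro y hy
      exact hJ y (Finset.mem_coe.1 hy)
    obtain ⟨SJ, hSJ⟩ := hmono _ J.2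
    refine le_antisymm ?_ hsub
    conv_lhs => rw [hSJ]
    apply Ideal.span_le.2
    rintro g ⟨u0, hu0, rfl⟩
    have hu0J : monomial u0 (1:𝕜) ∈ (J : Ideal (MvPolynomial (Fin m) 𝕜)) := by
      rw [hSJ]
      exact Ideal.subset_span ⟨u0, hu0, rfl⟩
    set d := Finsupp.degree u0 with hd
    have hsub2 : (levelFinset m d).filter (fun u => u ∈ A) ⊆
        monsd (J : Ideal (MvPolynomial (Fin m) 𝕜)) d := by
      intro u hu
      rw [Finset.mem_filter] at hu
      rw [monsd, Finset.mem_filter]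
      exact ⟨hu.1, hsub ((hmonJhat u).2 hu.2)⟩
    have hcards : (monsd (J : Ideal (MvPolynomial (Fin m) 𝕜)) d).card ≤
        ((levelFinset m d).filter (fun u => u ∈ A)).card := by
      rw [hAcount d, hcount _ J.2 d]
    have heqf := Finset.eq_of_subset_of_card_le hsub2 hcards
    have hu0m : u0 ∈ monsd (J : Ideal (MvPolynomial (Fin m) 𝕜)) d := by
      rw [monsd, Finset.mem_filter, mem_levelFinset]
      exact ⟨hd.symm, hu0J⟩
    rw [← heqf, Finset.mem_filter] at hu0m
    exact SetLike.mem_coe.2 ((hmonJhat u0).2 hu0m.2)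
  obtain ⟨J1, hJ1, J2, hJ2, hne⟩ := (hUinf _ hTU).nontrivial
  exact hne (Subtype.ext (by rw [key J1 hJ1, key J2 hJ2]))

end Comb


/-- (Proposition 3.5.)  A homogeneous ideal `I ⊆ K[x_0,…,x_n]` has only finitely many
distinct monomial initial ideals `in_w(I)` as `w` varies over `Γ^{n+1}`. -/
theorem finitely_many_monomial_initialIdeals {K 𝕜 : Type} [Field K] [Field 𝕜]
    (V : ValSetup K 𝕜) (hdense : Dense V.Gamma) (hQ : ∀ q : ℚ, (q : ℝ) ∈ V.Gamma) {n : ℕ}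
    (I : Ideal (MvPolynomial (Fin (n+1)) K)) (hI : IsHomogIdeal I) :
    {J : Ideal (MvPolynomial (Fin (n+1)) 𝕜) | IsMonomialIdeal J ∧
      ∃ w : Fin (n+1) → ℝ, (∀ i, w i ∈ V.Gamma) ∧ J = V.initialIdeal w I}.Finite := by
  have hfin := monomial_ideals_finite
    {J : Ideal (MvPolynomial (Fin (n+1)) 𝕜) | IsMonomialIdeal J ∧
      ∃ w : Fin (n+1) → ℝ, (∀ i, w i ∈ V.Gamma) ∧ J = V.initialIdeal w I}
    (hilb I) (fun J hJ => hJ.1) ?_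
  · exact hfin
  · rintro J ⟨hJmono, w, hw, hJw⟩ d
    exact count_eq_hilb V hw hI hJmono hJw d
end
end

section
/- Let I ⊆ K[x_1^{±1},…,x_n^{±1}] be an ideal, let I^h ⊆ K[x_0,…,x_n] be the homogenization of I ∩ K[x_1,…,x_n], and let w ∈ Γ^n. Then setting x_0 = 1 in the initial ideal in_{(0,w)}(I^h) yields the initial ideal in_w(I), as ideals of k[x_1^{±1},…,x_n^{±1}]. -/
open MvPolynomial
open scoped Classical

noncomputable section

/-- The Laurent polynomial ring `K[x_1^{±1},…,x_n^{±1}]`, i.e. the monoid algebra of `ℤ^n`. -/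
abbrev LaurentPoly (K : Type) [CommRing K] (n : ℕ) : Type := AddMonoidAlgebra K (Fin n → ℤ)

namespace ValSetup

variable {K 𝕜 : Type} [Field K] [Field 𝕜]

/-- `trop(f)(w)` for a Laurent polynomial `f`. -/
def tropL (V : ValSetup K 𝕜) {n : ℕ} (f : LaurentPoly K n) (w : Fin n → ℝ) : ℝ :=
  sInf ((fun u => V.val (f.coeff u) + dotZ w u) '' (f.coeff.support : Set (Fin n → ℤ)))

/-- The initial form `in_w(f) ∈ 𝕜[x_1^{±1},…,x_n^{±1}]` of a Laurent polynomial. -/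
def initialFormL (V : ValSetup K 𝕜) {n : ℕ} (w : Fin n → ℝ) (f : LaurentPoly K n) :
    LaurentPoly 𝕜 n :=
  ∑ u ∈ f.coeff.support.filter (fun u => V.val (f.coeff u) + dotZ w u = V.tropL f w),
    AddMonoidAlgebra.single u (V.res (V.t (-(V.val (f.coeff u))) * f.coeff u))

/-- The initial ideal `in_w(I) ⊆ 𝕜[x_1^{±1},…,x_n^{±1}]` of an ideal of Laurent polynomials. -/
def initialIdealL (V : ValSetup K 𝕜) {n : ℕ} (w : Fin n → ℝ) (I : Ideal (LaurentPoly K n)) :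
    Ideal (LaurentPoly 𝕜 n) :=
  Ideal.span {g | ∃ f ∈ I, g = V.initialFormL w f}

/-- The tropical hypersurface `trop(V(f))` of a Laurent polynomial `f = Σ_u c_u x^u`:
the set of `w ∈ ℝ^n` at which the minimum `min{val(c_u) + w·u : c_u ≠ 0}` is achieved
at least twice. -/
def tropHyp (V : ValSetup K 𝕜) {n : ℕ} (f : LaurentPoly K n) : Set (Fin n → ℝ) :=
  {w | ∃ u₁ ∈ f.coeff.support, ∃ u₂ ∈ f.coeff.support, u₁ ≠ u₂ ∧
    V.val (f.coeff u₁) + dotZ w u₁ = V.val (f.coeff u₂) + dotZ w u₂ ∧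
    ∀ u ∈ f.coeff.support, V.val (f.coeff u₁) + dotZ w u₁ ≤ V.val (f.coeff u) + dotZ w u}

/-- `trop(V(I)) = ⋂_{0 ≠ f ∈ I} trop(V(f))` for an ideal of Laurent polynomials. -/
def tropV (V : ValSetup K 𝕜) {n : ℕ} (I : Ideal (LaurentPoly K n)) : Set (Fin n → ℝ) :=
  ⋂ f ∈ {f : LaurentPoly K n | f ∈ I ∧ f ≠ 0}, V.tropHyp f

end ValSetup

/-- The character of `ℤ^n` given by a point `x` of the torus `(K^*)^n`:
`u ↦ x^u = Π_i x_i^{u_i}`. -/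
def torusChar {K : Type} [Field K] {n : ℕ} (x : Fin n → Kˣ) :
    Multiplicative (Fin n → ℤ) →* K where
  toFun u := ∏ i, ((x i : K) ^ ((Multiplicative.toAdd u) i : ℤ))
  map_one' := by simp
  map_mul' u v := by
    simp only [← Finset.prod_mul_distrib, toAdd_mul, Pi.add_apply]
    refine Finset.prod_congr rfl fun i _ => ?_
    exact zpow_add₀ (x i).ne_zero _ _

/-- Evaluation of Laurent polynomials at a point of the torus `(K^*)^n`, as a `K`-algebra
homomorphism. -/
def torusEval {K : Type} [Field K] {n : ℕ} (x : Fin n → Kˣ) :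
    LaurentPoly K n →ₐ[K] K :=
  AddMonoidAlgebra.lift K K (Fin n → ℤ) (torusChar x)

/-- The subvariety of the torus `(K^*)^n` cut out by an ideal of Laurent polynomials. -/
def torusZeros {K : Type} [Field K] {n : ℕ} (J : Ideal (LaurentPoly K n)) :
    Set (Fin n → Kˣ) :=
  {x | ∀ f ∈ J, torusEval x f = 0}

/-- The ideal `I(X)` of all Laurent polynomials vanishing on a subset `X` of the torus. -/
def vanishingIdeal {K : Type} [Field K] {n : ℕ} (X : Set (Fin n → Kˣ)) :
    Ideal (LaurentPoly K n) where
  carrier := {f | ∀ x ∈ X, torusEval x f = 0}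
  add_mem' ha hb x hx := by simp [map_add, ha x hx, hb x hx]
  zero_mem' x hx := by simp
  smul_mem' c f hf x hx := by simp [smul_eq_mul, map_mul, hf x hx]

/-- The inclusion `K[x_1,…,x_n] → K[x_1^{±1},…,x_n^{±1}]`. -/
def polyToLaurent (K : Type) [Field K] (n : ℕ) :
    MvPolynomial (Fin n) K →ₐ[K] LaurentPoly K n :=
  MvPolynomial.aeval
    (fun i => (AddMonoidAlgebra.single (Pi.single i (1 : ℤ)) (1 : K) : LaurentPoly K n))

/-- The homogenization `x_0^{deg f} f(x_1/x_0,…,x_n/x_0)` of a polynomial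
`f ∈ K[x_1,…,x_n]`, an element of `K[x_0,x_1,…,x_n]` (the new variable is indexed by
`0 : Fin (n+1)`). -/
def homogenize {K : Type} [Field K] {n : ℕ} (f : MvPolynomial (Fin n) K) :
    MvPolynomial (Fin (n+1)) K :=
  ∑ u ∈ f.support,
    monomial (Finsupp.equivFunOnFinite.symm
        (Fin.cons (f.totalDegree - (u.sum fun _ e => e)) (u : Fin n → ℕ)))
      (coeff u f)

/-- The homogenization `I^h ⊆ K[x_0,…,x_n]` of `I ∩ K[x_1,…,x_n]`, for an ideal `I` of the
Laurent polynomial ring. -/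
def homogIdeal {K : Type} [Field K] {n : ℕ} (I : Ideal (LaurentPoly K n)) :
    Ideal (MvPolynomial (Fin (n+1)) K) :=
  Ideal.span {g | ∃ f : MvPolynomial (Fin n) K, polyToLaurent K n f ∈ I ∧ g = homogenize f}

/-- The map `𝕜[x_0,…,x_n] → 𝕜[x_1^{±1},…,x_n^{±1}]` setting `x_0 = 1`. -/
def dehomogenize (𝕜 : Type) [Field 𝕜] (n : ℕ) :
    MvPolynomial (Fin (n+1)) 𝕜 →ₐ[𝕜] LaurentPoly 𝕜 n :=
  MvPolynomial.aeval
    (Fin.cons 1 (fun i => (AddMonoidAlgebra.single (Pi.single i (1 : ℤ)) (1 : 𝕜) : LaurentPoly 𝕜 n)))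


section Helpers


section InfHelpers
variable {α : Type*}

lemma csInf_image_le (s : Finset α) (φ : α → ℝ) {a : α} (ha : a ∈ s) :
    sInf (φ '' ↑s) ≤ φ a :=
  csInf_le (s.finite_toSet.image φ).bddBelow ⟨a, ha, rfl⟩

lemma exists_eq_csInf_image (s : Finset α) (hs : s.Nonempty) (φ : α → ℝ) :
    ∃ a ∈ s, φ a = sInf (φ '' ↑s) := by
  have h : sInf (φ '' ↑s) ∈ φ '' ↑s :=
    Set.Nonempty.csInf_mem (hs.to_set.image φ) (s.finite_toSet.image φ)
  obtain ⟨a, ha, h⟩ := h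
  exact ⟨a, ha, h⟩

end InfHelpers

section SingleSums
variable {α β M : Type*} [AddCommMonoid M]

lemma sum_single_apply_of_injOn (s : Finset α) (g : α → β) (c : α → M)
    (hinj : Set.InjOn g ↑s) {u : α} (hu : u ∈ s) :
    (∑ x ∈ s, Finsupp.single (g x) (c x)) (g u) = c u := by
  rw [Finset.sum_apply']
  rw [Finset.sum_eq_single u]
  · simp [Finsupp.single_apply]
  · intro b hb hne
    rw [Finsupp.single_apply, if_neg]
    exact fun h => hne (hinj hb hu h)
  · intro h; exact absurd hu h

lemma support_sum_single [DecidableEq β] (s : Finset α) (g : α → β) (c : α → M)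
    (hinj : Set.InjOn g ↑s) (hc : ∀ x ∈ s, c x ≠ 0) :
    (∑ x ∈ s, Finsupp.single (g x) (c x)).support = s.image g := by
  ext v
  constructor
  · intro hv
    have := Finsupp.support_finset_sum hv
    rw [Finset.mem_biUnion] at this
    obtain ⟨x, hx, hvx⟩ := this
    have := Finsupp.support_single_subset hvx
    rw [Finset.mem_singleton] at this
    subst this
    exact Finset.mem_image_of_mem g hx
  · intro hv
    obtain ⟨u, hu, rfl⟩ := Finset.mem_image.mp hv
    rw [Finsupp.mem_support_iff, sum_single_apply_of_injOn s g c hinj hu]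
    exact hc u hu

end SingleSums


section Comp
variable {K : Type} [Field K] {n : ℕ}


/-- the ℤ-exponent vector of a ℕ-exponent vector -/
def natToZ {n : ℕ} (u : Fin n →₀ ℕ) : Fin n → ℤ := fun i => (u i : ℤ)

def tailZ {n : ℕ} (u : Fin (n+1) →₀ ℕ) : Fin n → ℤ := fun i => (u i.succ : ℤ)

lemma sum_single_pi (m : ℕ) (g : Fin m → ℕ) :
    ∑ i : Fin m, g i • Pi.single i (1 : ℤ) = fun j => (g j : ℤ) := by
  funext j
  rw [Finset.sum_apply]
  simp [Pi.single_apply]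

lemma polyToLaurent_monomial (u : Fin n →₀ ℕ) (c : K) :
    polyToLaurent K n (monomial u c) = AddMonoidAlgebra.single (natToZ u) c := by
  rw [polyToLaurent, aeval_monomial]
  rw [Finsupp.prod_fintype _ _ (fun i => pow_zero _)]
  simp_rw [AddMonoidAlgebra.single_pow]
  rw [AddMonoidAlgebra.prod_single]
  simp only [one_pow, Finset.prod_const_one]
  have : ∑ i : Fin n, u i • Pi.single i (1 : ℤ) = natToZ u := sum_single_pi n (u ·)
  rw [this]
  have halg : (algebraMap K (LaurentPoly K n)) c = AddMonoidAlgebra.single 0 c := rfl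
  rw [halg, AddMonoidAlgebra.single_mul_single, zero_add, mul_one]

lemma dehomogenize_monomial {𝕜 : Type} [Field 𝕜] (u : Fin (n+1) →₀ ℕ) (c : 𝕜) :
    dehomogenize 𝕜 n (monomial u c) = AddMonoidAlgebra.single (tailZ u) c := by
  rw [dehomogenize, aeval_monomial]
  rw [Finsupp.prod_fintype _ _ (fun i => pow_zero _)]
  rw [Fin.prod_univ_succ]
  simp only [Fin.cons_zero, Fin.cons_succ, one_pow, one_mul]
  simp_rw [AddMonoidAlgebra.single_pow]
  rw [AddMonoidAlgebra.prod_single]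
  simp only [one_pow, Finset.prod_const_one]
  have : ∑ i : Fin n, u i.succ • Pi.single i (1 : ℤ) = tailZ u :=
    sum_single_pi n (fun i => u i.succ)
  rw [this]
  have halg : (algebraMap 𝕜 (LaurentPoly 𝕜 n)) c = AddMonoidAlgebra.single 0 c := rfl
  rw [halg, AddMonoidAlgebra.single_mul_single, zero_add, mul_one]

end Comp
end Helpers


section Key
variable {K 𝕜 : Type} [Field K] [Field 𝕜] {n : ℕ}

lemma dotN_cons (w : Fin n → ℝ) (u : Fin (n+1) →₀ ℕ) :
    dotN (Fin.cons 0 w) u = dotZ w (tailZ u) := by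
  unfold dotN dotZ tailZ
  rw [Fin.sum_univ_succ]
  simp

lemma dotZ_add (w : Fin n → ℝ) (a b : Fin n → ℤ) :
    dotZ w (a + b) = dotZ w a + dotZ w b := by
  unfold dotZ
  rw [← Finset.sum_add_distrib]
  refine Finset.sum_congr rfl fun i _ => ?_
  have h : (a + b) i = a i + b i := rfl
  rw [h]
  push_cast
  ring

lemma finsuppSum_eq_univ {m : ℕ} (u : Fin m →₀ ℕ) :
    (u.sum fun _ e => e) = ∑ i, u i := by
  rw [Finsupp.sum]
  exact Finset.sum_subset (Finset.subset_univ _) (fun i _ h => Finsupp.notMem_support_iff.mp h)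

lemma degree_eq_univ {m : ℕ} (u : Fin m →₀ ℕ) : u.degree = ∑ i, u i := by
  rw [Finsupp.degree]
  exact Finset.sum_subset (Finset.subset_univ _) (fun i _ h => Finsupp.notMem_support_iff.mp h)

lemma injOn_tailZ {s : Finset (Fin (n+1) →₀ ℕ)} {d : ℕ} (h : ∀ u ∈ s, (∑ i, u i) = d) :
    Set.InjOn (tailZ (n := n)) ↑s := by
  intro u hu u' hu' he
  have ht : ∀ j : Fin n, u j.succ = u' j.succ := by
    intro j
    have := congrFun he j
    simpa [tailZ] using this
  have h0 : u 0 = u' 0 := by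
    have h1 := h u hu
    have h2 := h u' hu'
    rw [Fin.sum_univ_succ] at h1 h2
    have h3 : ∑ i : Fin n, u i.succ = ∑ i : Fin n, u' i.succ :=
      Finset.sum_congr rfl (fun j _ => ht j)
    omega
  ext j
  exact Fin.cases h0 ht j

lemma dehomogenize_eq_sum (F : MvPolynomial (Fin (n+1)) K) :
    dehomogenize K n F = ∑ u ∈ F.support, AddMonoidAlgebra.single (tailZ u) (MvPolynomial.coeff u F) := by
  conv_lhs => rw [F.as_sum]
  rw [map_sum]
  exact Finset.sum_congr rfl fun u _ => dehomogenize_monomial u _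

lemma dehom_apply {F : MvPolynomial (Fin (n+1)) K} (hinj : Set.InjOn (tailZ (n := n)) ↑F.support)
    {u : Fin (n+1) →₀ ℕ} (hu : u ∈ F.support) :
    (dehomogenize K n F).coeff (tailZ u) = MvPolynomial.coeff u F := by
  rw [dehomogenize_eq_sum, AddMonoidAlgebra.coeff_sum]
  exact sum_single_apply_of_injOn _ _ _ hinj hu

lemma dehom_support {F : MvPolynomial (Fin (n+1)) K} (hinj : Set.InjOn (tailZ (n := n)) ↑F.support) :
    (dehomogenize K n F).coeff.support = F.support.image tailZ := by
  rw [dehomogenize_eq_sum, AddMonoidAlgebra.coeff_sum]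
  exact support_sum_single _ _ _ hinj (fun x hx => MvPolynomial.mem_support_iff.mp hx)

lemma trop_dehom (V : ValSetup K 𝕜) {F : MvPolynomial (Fin (n+1)) K}
    (hinj : Set.InjOn (tailZ (n := n)) ↑F.support) (w : Fin n → ℝ) :
    V.tropL (dehomogenize K n F) w = V.trop F (Fin.cons 0 w) := by
  unfold ValSetup.tropL ValSetup.trop
  congr 1
  rw [dehom_support hinj, Finset.coe_image, Set.image_image]
  apply Set.image_congr
  intro u hu
  rw [dehom_apply hinj (Finset.mem_coe.mp hu), dotN_cons]

lemma keyA (V : ValSetup K 𝕜) (w : Fin n → ℝ) (F : MvPolynomial (Fin (n+1)) K)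
    (hinj : Set.InjOn (tailZ (n := n)) ↑F.support) :
    dehomogenize 𝕜 n (V.initialForm (Fin.cons 0 w) F)
      = V.initialFormL w (dehomogenize K n F) := by
  unfold ValSetup.initialForm ValSetup.initialFormL
  rw [map_sum]
  have hfil : ((dehomogenize K n F).coeff.support.filter
      (fun v => V.val ((dehomogenize K n F).coeff v) + dotZ w v = V.tropL (dehomogenize K n F) w))
      = (F.support.filter (fun u => V.val (MvPolynomial.coeff u F) + dotN (Fin.cons 0 w) u
          = V.trop F (Fin.cons 0 w))).image tailZ := by
    rw [dehom_support hinj, Finset.filter_image]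
    congr 1
    apply Finset.filter_congr
    intro u hu
    rw [dehom_apply hinj hu, dotN_cons, trop_dehom V hinj]
  rw [hfil, Finset.sum_image (fun x hx y hy h =>
    hinj (Finset.mem_coe.mpr (Finset.filter_subset _ _ hx))
      (Finset.mem_coe.mpr (Finset.filter_subset _ _ hy)) h)]
  refine Finset.sum_congr rfl fun u hu => ?_
  rw [dehomogenize_monomial, dehom_apply hinj (Finset.filter_subset _ _ hu)]

end Key


section Homog
variable {K 𝕜 : Type} [Field K] [Field 𝕜] {n : ℕ}

attribute [local instance] MvPolynomial.gradedAlgebra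

lemma homogenize_support_sum (g : MvPolynomial (Fin n) K) {u : Fin (n+1) →₀ ℕ}
    (hu : u ∈ (homogenize g).support) : (∑ i, u i) = g.totalDegree := by
  classical
  unfold homogenize at hu
  have h := MvPolynomial.support_sum hu
  rw [Finset.mem_biUnion] at h
  obtain ⟨v, hv, huv⟩ := h
  have h2 := MvPolynomial.support_monomial_subset huv
  rw [Finset.mem_singleton] at h2
  subst h2
  have hle : (v.sum fun _ e => e) ≤ g.totalDegree := MvPolynomial.le_totalDegree hv
  rw [finsuppSum_eq_univ] at hle
  rw [Fin.sum_univ_succ]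
  simp only [Finsupp.coe_equivFunOnFinite_symm, Fin.cons_zero, Fin.cons_succ]
  rw [finsuppSum_eq_univ]
  omega

lemma homogenize_injOn (g : MvPolynomial (Fin n) K) :
    Set.InjOn (tailZ (n := n)) ↑(homogenize g).support :=
  injOn_tailZ (fun u hu => homogenize_support_sum g hu)

lemma dehom_homogenize (g : MvPolynomial (Fin n) K) :
    dehomogenize K n (homogenize g) = polyToLaurent K n g := by
  unfold homogenize
  rw [map_sum]
  conv_rhs => rw [g.as_sum, map_sum]
  refine Finset.sum_congr rfl fun u hu => ?_
  rw [dehomogenize_monomial, polyToLaurent_monomial]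
  congr 1

lemma dehom_mem_of_homogIdeal {I : Ideal (LaurentPoly K n)}
    {F : MvPolynomial (Fin (n+1)) K} (hF : F ∈ homogIdeal I) :
    dehomogenize K n F ∈ I := by
  have hle : homogIdeal I ≤ Ideal.comap (dehomogenize K n) I := by
    rw [homogIdeal, Ideal.span_le]
    rintro _ ⟨g, hg, rfl⟩
    simpa [Ideal.mem_comap, dehom_homogenize] using hg
  exact hle hF

lemma homogenize_isHomogeneous (g : MvPolynomial (Fin n) K) :
    (homogenize g).IsHomogeneous g.totalDegree := by
  unfold homogenize
  apply MvPolynomial.IsHomogeneous.sum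
  intro u hu
  apply MvPolynomial.isHomogeneous_monomial
  rw [degree_eq_univ, Fin.sum_univ_succ]
  simp only [Finsupp.coe_equivFunOnFinite_symm, Fin.cons_zero, Fin.cons_succ]
  have hle : (u.sum fun _ e => e) ≤ g.totalDegree := MvPolynomial.le_totalDegree hu
  rw [← finsuppSum_eq_univ]
  omega

lemma homogIdeal_isHomogeneous (I : Ideal (LaurentPoly K n)) :
    Ideal.IsHomogeneous (homogeneousSubmodule (Fin (n+1)) K) (homogIdeal I) := by
  apply Ideal.homogeneous_span
  rintro _ ⟨g, hg, rfl⟩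
  exact ⟨g.totalDegree, (mem_homogeneousSubmodule _ _).mpr (homogenize_isHomogeneous g)⟩

lemma homogComponent_mem_homogIdeal {I : Ideal (LaurentPoly K n)}
    {F : MvPolynomial (Fin (n+1)) K} (hF : F ∈ homogIdeal I) (d : ℕ) :
    homogeneousComponent d F ∈ homogIdeal I := by
  have h := homogIdeal_isHomogeneous I d hF
  rwa [← DirectSum.Decomposition.decompose'_eq, MvPolynomial.decomposition.decompose'_apply] at h

lemma support_homogComponent (F : MvPolynomial (Fin (n+1)) K) (d : ℕ) :
    (homogeneousComponent d F).support = F.support.filter (fun u => u.degree = d) := by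
  ext u
  simp only [MvPolynomial.mem_support_iff, Finset.mem_filter,
    MvPolynomial.coeff_homogeneousComponent]
  by_cases h : u.degree = d <;> simp [h]

end Homog


section Decomp
variable {K 𝕜 : Type} [Field K] [Field 𝕜] {n : ℕ}

lemma trop_le_of_mem (V : ValSetup K 𝕜) (w : Fin n → ℝ) (G : MvPolynomial (Fin (n+1)) K)
    {u : Fin (n+1) →₀ ℕ} (hu : u ∈ G.support) :
    V.trop G (Fin.cons 0 w) ≤ V.val (MvPolynomial.coeff u G) + dotN (Fin.cons 0 w) u :=
  csInf_image_le G.support _ hu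

lemma exists_trop_eq (V : ValSetup K 𝕜) (w : Fin n → ℝ) (G : MvPolynomial (Fin (n+1)) K)
    (hG : G.support.Nonempty) :
    ∃ u ∈ G.support, V.val (MvPolynomial.coeff u G) + dotN (Fin.cons 0 w) u
      = V.trop G (Fin.cons 0 w) :=
  exists_eq_csInf_image G.support hG _

lemma initialForm_decomp (V : ValSetup K 𝕜) (w : Fin n → ℝ) (F : MvPolynomial (Fin (n+1)) K) :
    V.initialForm (Fin.cons 0 w) F =
      ∑ d ∈ (F.support.filter (fun u => V.val (MvPolynomial.coeff u F) + dotN (Fin.cons 0 w) u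
          = V.trop F (Fin.cons 0 w))).image Finsupp.degree,
        V.initialForm (Fin.cons 0 w) (homogeneousComponent d F) := by
  let S := F.support.filter (fun u => V.val (MvPolynomial.coeff u F) + dotN (Fin.cons 0 w) u
      = V.trop F (Fin.cons 0 w))
  let D := S.image Finsupp.degree
  have hcoeff : ∀ d : ℕ, ∀ u : Fin (n+1) →₀ ℕ, u.degree = d →
      MvPolynomial.coeff u (homogeneousComponent d F) = MvPolynomial.coeff u F := by
    intro d u hud
    rw [MvPolynomial.coeff_homogeneousComponent, if_pos hud]
  have htrop : ∀ d ∈ D, V.trop (homogeneousComponent d F) (Fin.cons 0 w)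
      = V.trop F (Fin.cons 0 w) := by
    intro d hd
    obtain ⟨u₀, hu₀S, hu₀d⟩ := Finset.mem_image.mp hd
    have hu₀F := Finset.mem_filter.mp hu₀S
    have hu₀supp : u₀ ∈ (homogeneousComponent d F).support := by
      rw [support_homogComponent]
      exact Finset.mem_filter.mpr ⟨hu₀F.1, hu₀d⟩
    apply le_antisymm
    · have h1 := trop_le_of_mem V w (homogeneousComponent d F) hu₀supp
      rw [hcoeff d u₀ hu₀d] at h1
      rw [← hu₀F.2]
      exact h1
    · obtain ⟨u₁, hu₁, he⟩ := exists_trop_eq V w (homogeneousComponent d F) ⟨u₀, hu₀supp⟩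
      rw [support_homogComponent, Finset.mem_filter] at hu₁
      rw [← he, hcoeff d u₁ hu₁.2]
      exact trop_le_of_mem V w F hu₁.1
  have hfil : ∀ d ∈ D, (homogeneousComponent d F).support.filter
      (fun u => V.val (MvPolynomial.coeff u (homogeneousComponent d F)) + dotN (Fin.cons 0 w) u
        = V.trop (homogeneousComponent d F) (Fin.cons 0 w))
      = (F.support.filter (fun u => V.val (MvPolynomial.coeff u F) + dotN (Fin.cons 0 w) u
          = V.trop F (Fin.cons 0 w))).filter (fun u => u.degree = d) := by
    intro d hd
    rw [support_homogComponent]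
    ext u
    simp only [Finset.mem_filter, Finset.mem_filter]
    constructor
    · rintro ⟨⟨huF, hud⟩, hcond⟩
      rw [hcoeff d u hud, htrop d hd] at hcond
      exact ⟨⟨huF, hcond⟩, hud⟩
    · rintro ⟨⟨huF, hcond⟩, hud⟩
      refine ⟨⟨huF, hud⟩, ?_⟩
      rw [hcoeff d u hud, htrop d hd]
      exact hcond
  unfold ValSetup.initialForm
  rw [← Finset.sum_fiberwise_of_maps_to (g := Finsupp.degree)
    (t := (F.support.filter (fun u => V.val (MvPolynomial.coeff u F) + dotN (Fin.cons 0 w) u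
      = V.trop F (Fin.cons 0 w))).image Finsupp.degree)
    (fun u hu => Finset.mem_image_of_mem _ hu)]
  refine Finset.sum_congr rfl fun d hd => ?_
  rw [hfil d hd]
  refine Finset.sum_congr rfl fun u hu => ?_
  have hud : u.degree = d := (Finset.mem_filter.mp hu).2
  rw [hcoeff d u hud]

end Decomp

section Shift
variable {K 𝕜 : Type} [Field K] [Field 𝕜] {n : ℕ}

lemma support_single_mul (f : LaurentPoly K n) (a : Fin n → ℤ) :
    (AddMonoidAlgebra.single a (1:K) * f).coeff.support = f.coeff.support.image (a + ·) := by
  ext v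
  rw [Finsupp.mem_support_iff, AddMonoidAlgebra.coeff_single_mul_apply, one_mul]
  constructor
  · intro h
    exact Finset.mem_image.mpr ⟨-a + v, Finsupp.mem_support_iff.mpr h, add_neg_cancel_left a v⟩
  · intro h
    obtain ⟨u, hu, rfl⟩ := Finset.mem_image.mp h
    rw [neg_add_cancel_left]
    exact Finsupp.mem_support_iff.mp hu

lemma tropL_le_of_mem (V : ValSetup K 𝕜) (w : Fin n → ℝ) (f : LaurentPoly K n)
    {v : Fin n → ℤ} (hv : v ∈ f.coeff.support) :
    V.tropL f w ≤ V.val (f.coeff v) + dotZ w v :=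
  csInf_image_le f.coeff.support _ hv

lemma exists_tropL_eq (V : ValSetup K 𝕜) (w : Fin n → ℝ) (f : LaurentPoly K n)
    (hf : f.coeff.support.Nonempty) :
    ∃ v ∈ f.coeff.support, V.val (f.coeff v) + dotZ w v = V.tropL f w :=
  exists_eq_csInf_image f.coeff.support hf _

lemma single_mul_apply_shift (f : LaurentPoly K n) (a u : Fin n → ℤ) :
    (AddMonoidAlgebra.single a (1:K) * f).coeff (a + u) = f.coeff u := by
  rw [AddMonoidAlgebra.coeff_single_mul_apply, one_mul, neg_add_cancel_left]

lemma tropL_shift (V : ValSetup K 𝕜) (w : Fin n → ℝ) (f : LaurentPoly K n) (a : Fin n → ℤ)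
    (hf : f.coeff.support.Nonempty) :
    V.tropL (AddMonoidAlgebra.single a (1:K) * f) w = dotZ w a + V.tropL f w := by
  have hsupp := support_single_mul f a
  apply le_antisymm
  · obtain ⟨u, hu, he⟩ := exists_tropL_eq V w f hf
    have hmem : a + u ∈ (AddMonoidAlgebra.single a (1:K) * f).coeff.support := by
      rw [hsupp]; exact Finset.mem_image_of_mem _ hu
    have h1 := tropL_le_of_mem V w _ hmem
    rw [single_mul_apply_shift, dotZ_add] at h1
    linarith
  · obtain ⟨v, hv, he⟩ := exists_tropL_eq V w (AddMonoidAlgebra.single a (1:K) * f)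
      (by rw [hsupp]; exact hf.image _)
    rw [hsupp] at hv
    obtain ⟨u, hu, rfl⟩ := Finset.mem_image.mp hv
    rw [single_mul_apply_shift, dotZ_add] at he
    have h2 := tropL_le_of_mem V w f hu
    linarith

lemma initialFormL_shift (V : ValSetup K 𝕜) (w : Fin n → ℝ) (f : LaurentPoly K n)
    (a : Fin n → ℤ) (hf : f.coeff.support.Nonempty) :
    V.initialFormL w (AddMonoidAlgebra.single a (1:K) * f)
      = AddMonoidAlgebra.single a (1:𝕜) * V.initialFormL w f := by
  unfold ValSetup.initialFormL
  rw [Finset.mul_sum]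
  have hsupp := support_single_mul f a
  have hfil : (AddMonoidAlgebra.single a (1:K) * f).coeff.support.filter
      (fun v => V.val ((AddMonoidAlgebra.single a (1:K) * f).coeff v) + dotZ w v
        = V.tropL (AddMonoidAlgebra.single a (1:K) * f) w)
      = (f.coeff.support.filter (fun u => V.val (f.coeff u) + dotZ w u = V.tropL f w)).image (a + ·) := by
    rw [hsupp, Finset.filter_image]
    congr 1
    apply Finset.filter_congr
    intro u hu
    rw [single_mul_apply_shift, dotZ_add, tropL_shift V w f a hf]
    constructor
    · intro h; linarith
    · intro h; linarith
  rw [hfil, Finset.sum_image (fun x _ y _ h => by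
    have := congrArg (fun z => -a + z) h
    simpa using this)]
  refine Finset.sum_congr rfl fun u hu => ?_
  rw [single_mul_apply_shift, AddMonoidAlgebra.single_mul_single, one_mul]

end Shift


section Main
variable {K 𝕜 : Type} [Field K] [Field 𝕜] {n : ℕ}

lemma exists_poly (f : LaurentPoly K n) :
    ∃ (N : ℕ) (g : MvPolynomial (Fin n) K),
      polyToLaurent K n g = AddMonoidAlgebra.single (fun _ => (N:ℤ)) (1:K) * f := by
  classical
  obtain ⟨N, hbound⟩ : ∃ N : ℕ, ∀ u ∈ f.coeff.support, ∀ i, 0 ≤ u i + (N:ℤ) := by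
    refine ⟨f.coeff.support.sup (fun u => Finset.univ.sup (fun i => (u i).natAbs)), fun u hu i => ?_⟩
    have h1 : (u i).natAbs ≤ Finset.univ.sup (fun i => (u i).natAbs) :=
      Finset.le_sup (f := fun i => (u i).natAbs) (Finset.mem_univ i)
    have h2 := Finset.le_sup (f := fun u => Finset.univ.sup (fun i => (u i).natAbs)) hu
    have h3 := h1.trans h2
    have h4 : -(((u i).natAbs : ℤ)) ≤ u i := by
      rw [← Int.abs_eq_natAbs]
      exact neg_abs_le _
    have h5 : (((u i).natAbs : ℤ)) ≤
        ((f.coeff.support.sup fun u => Finset.univ.sup fun i => (u i).natAbs : ℕ) : ℤ) :=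
      Int.ofNat_le.mpr h3
    linarith
  refine ⟨N, ∑ u ∈ f.coeff.support,
    MvPolynomial.monomial (Finsupp.equivFunOnFinite.symm (fun i => (u i + N).toNat)) (f.coeff u), ?_⟩
  rw [map_sum]
  have hrhs : (AddMonoidAlgebra.single (fun _ => (N:ℤ)) (1:K) * f : LaurentPoly K n)
      = ∑ u ∈ f.coeff.support, AddMonoidAlgebra.single ((fun _ => (N:ℤ)) + u) (f.coeff u) := by
    conv_lhs => rw [← AddMonoidAlgebra.sum_coeff_single f, Finsupp.sum, Finset.mul_sum]
    refine Finset.sum_congr rfl fun u hu => ?_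
    rw [AddMonoidAlgebra.single_mul_single, one_mul]
  rw [hrhs]
  refine Finset.sum_congr rfl fun u hu => ?_
  rw [polyToLaurent_monomial]
  congr 1
  funext i
  simp only [natToZ, Finsupp.coe_equivFunOnFinite_symm, Pi.add_apply]
  rw [Int.toNat_of_nonneg (by have := hbound u hu i; omega)]
  ring

lemma initialFormL_zero (V : ValSetup K 𝕜) (w : Fin n → ℝ) :
    V.initialFormL w (0 : LaurentPoly K n) = 0 := by
  unfold ValSetup.initialFormL
  simp
  exact Finset.sum_eq_zero (fun _ h => absurd (Finset.mem_filter.mp h).1 (Finset.notMem_empty _))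

end Main

/-- (See Proposition 2.6.2 of [Maclagan–Sturmfels].)  For an ideal
`I ⊆ K[x_1^{±1},…,x_n^{±1}]` with homogenization `I^h ⊆ K[x_0,…,x_n]` of
`I ∩ K[x_1,…,x_n]`, and `w ∈ Γ^n`, setting `x_0 = 1` in `in_{(0,w)}(I^h)` yields `in_w(I)`,
as ideals of `𝕜[x_1^{±1},…,x_n^{±1}]`. -/
theorem dehomogenize_initialIdeal {K 𝕜 : Type} [Field K] [Field 𝕜] (V : ValSetup K 𝕜)
    (hdense : Dense V.Gamma) (hQ : ∀ q : ℚ, (q : ℝ) ∈ V.Gamma) {n : ℕ}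
    (I : Ideal (LaurentPoly K n)) (w : Fin n → ℝ) (hw : ∀ i, w i ∈ V.Gamma) :
    Ideal.map (dehomogenize 𝕜 n) (V.initialIdeal (Fin.cons 0 w) (homogIdeal I))
      = V.initialIdealL w I := by
  rw [ValSetup.initialIdealL, ValSetup.initialIdeal, Ideal.map_span]
  apply le_antisymm
  · rw [Ideal.span_le]
    rintro x hx
    obtain ⟨y, ⟨F, hF, rfl⟩, rfl⟩ := hx
    rw [initialForm_decomp V w F, map_sum]
    apply Ideal.sum_mem
    intro d hd
    have hinj : Set.InjOn (tailZ (n := n)) ↑(homogeneousComponent d F).support := by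
      apply injOn_tailZ (d := d)
      intro u hu
      rw [support_homogComponent] at hu
      have h2 := (Finset.mem_filter.mp hu).2
      rw [degree_eq_univ] at h2
      exact h2
    rw [keyA V w _ hinj]
    exact Ideal.subset_span ⟨dehomogenize K n (homogeneousComponent d F),
      dehom_mem_of_homogIdeal (homogComponent_mem_homogIdeal hF d), rfl⟩
  · rw [Ideal.span_le]
    rintro x ⟨f, hf, rfl⟩
    by_cases hf0 : f = 0
    · rw [hf0, initialFormL_zero]
      exact Ideal.zero_mem _
    obtain ⟨N, g, hg⟩ := exists_poly f
    have hmem : polyToLaurent K n g ∈ I := by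
      rw [hg]
      exact Ideal.mul_mem_left I _ hf
    have hFmem : homogenize g ∈ homogIdeal I := Ideal.subset_span ⟨g, hmem, rfl⟩
    have hkey : dehomogenize 𝕜 n (V.initialForm (Fin.cons 0 w) (homogenize g))
        = AddMonoidAlgebra.single (fun _ => (N:ℤ)) (1:𝕜) * V.initialFormL w f := by
      rw [keyA V w _ (homogenize_injOn g), dehom_homogenize, hg,
        initialFormL_shift V w f _ (Finsupp.support_nonempty_iff.mpr (fun h => hf0 (AddMonoidAlgebra.coeff_injective h)))]
    have hgen : AddMonoidAlgebra.single (fun _ => (N:ℤ)) (1:𝕜) * V.initialFormL w f ∈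
        Ideal.span (⇑(dehomogenize 𝕜 n) ''
          {g | ∃ F ∈ homogIdeal I, g = V.initialForm (Fin.cons 0 w) F}) := by
      rw [← hkey]
      exact Ideal.subset_span ⟨_, ⟨homogenize g, hFmem, rfl⟩, rfl⟩
    have hrew : V.initialFormL w f = AddMonoidAlgebra.single (fun _ => (-(N:ℤ))) (1:𝕜) *
        (AddMonoidAlgebra.single (fun _ => (N:ℤ)) (1:𝕜) * V.initialFormL w f) := by
      rw [← mul_assoc, AddMonoidAlgebra.single_mul_single, one_mul]
      have h0 : (fun (_ : Fin n) => (-(N:ℤ))) + (fun _ => (N:ℤ)) = 0 := by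
        funext i; simp
      rw [h0, ← AddMonoidAlgebra.one_def, one_mul]
    rw [hrew]
    exact Ideal.mul_mem_left _ _ hgen
end
end
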